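/- arXiv:1306.0031 — 5 statements merged into one kernel-verified Lean document; each statement's English description precedes it below -/
import Mathlib

section
/- The number of elements in the symmetric group S_n whose square is the identity equals n! times the coefficient of u^n in the exponential generating function e^{u + u^2/2}. -/
namespace InvolutionCountAux
open Equiv Equiv.Perm


open Real

noncomputable def f : ℝ → ℝ := fun u => Real.exp (u + u ^ 2 / 2)

lemma hf : ContDiff ℝ ⊤ f := by exact Real.contDiff_exp.comp (contDiff_id.add ((contDiff_id.pow 2).div_const 2))

lemma hderiv (u : ℝ) : HasDerivAt f (f u + u * f u) u := by
  have h1 : HasDerivAt (fun u : ℝ => u + u ^ 2 / 2) (1 + u) u := by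
    have := ((hasDerivAt_id u).add ((hasDerivAt_pow 2 u).div_const 2))
    exact this.congr_deriv (by ring)
  show HasDerivAt (fun u => Real.exp (u + u ^ 2 / 2)) _ u
  simpa [f, mul_comm, add_mul] using h1.exp

lemma deriv_f : deriv f = fun u => f u + u * f u := by
  funext u; exact (hderiv u).deriv

lemma mulDeriv {F : ℝ → ℝ} (h : ContDiff ℝ ⊤ F) (n : ℕ) :
    iteratedDeriv (n+1) (fun u => u * F u) = fun u =>
      u * iteratedDeriv (n+1) F u + (n+1) * iteratedDeriv n F u := by
  induction n with
  | zero =>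
    funext u
    rw [iteratedDeriv_one, deriv_fun_mul differentiableAt_fun_id (h.differentiable (by simp)).differentiableAt]
    simp [iteratedDeriv_one, iteratedDeriv_zero]; ring
  | succ n ih =>
    funext u
    have hd : ∀ k : ℕ, Differentiable ℝ (iteratedDeriv k F) := fun k =>
      h.differentiable_iteratedDeriv k (by simp)
    have e1 : iteratedDeriv (n + 1 + 1) (fun u => u * F u) u
        = deriv (fun u => u * iteratedDeriv (n+1) F u + (n+1 : ℝ) * iteratedDeriv n F u) u := by
      rw [iteratedDeriv_succ, ih]
    rw [e1, deriv_fun_add (f := fun u => u * iteratedDeriv (n+1) F u) ((differentiableAt_fun_id.mul ((hd (n+1)).differentiableAt)))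
      (((hd n).differentiableAt).const_mul _),
      deriv_fun_mul differentiableAt_fun_id ((hd (n+1)).differentiableAt),
      deriv_const_mul _ ((hd n).differentiableAt)]
    rw [← iteratedDeriv_succ, ← iteratedDeriv_succ]
    simp only [deriv_id'']
    push_cast
    ring

lemma iteratedDeriv_add' {F G : ℝ → ℝ} (hF : ContDiff ℝ ⊤ F) (hG : ContDiff ℝ ⊤ G) (n : ℕ) (x : ℝ) :
    iteratedDeriv n (fun u => F u + G u) x = iteratedDeriv n F x + iteratedDeriv n G x := by
  simp only [← iteratedDerivWithin_univ]
  exact iteratedDerivWithin_add (Set.mem_univ x) uniqueDiffOn_univ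
    (hF.of_le le_top).contDiffWithinAt (hG.of_le le_top).contDiffWithinAt

lemma base0 : iteratedDeriv 0 f 0 = 1 := by simp [f]

lemma base1 : iteratedDeriv 1 f 0 = 1 := by
  rw [iteratedDeriv_one, deriv_f]; simp [f]

lemma derivRec (n : ℕ) : iteratedDeriv (n+2) f 0 =
    iteratedDeriv (n+1) f 0 + (n+1) * iteratedDeriv n f 0 := by
  have h2 : ContDiff ℝ ⊤ (fun u : ℝ => u * f u) := contDiff_id.mul hf
  rw [show n+2 = (n+1)+1 by rfl, iteratedDeriv_succ', deriv_f,
    iteratedDeriv_add' hf h2 (n+1) 0, mulDeriv hf n]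
  simp

def I : ℕ → ℕ
  | 0 => 1
  | 1 => 1
  | (n+2) => I (n+1) + (n+1) * I n

lemma dmul {n : ℕ} (e1 e2 : Perm (Fin n)) :
    decomposeFin.symm (0, e1) * decomposeFin.symm (0, e2) = decomposeFin.symm (0, e1 * e2) := by
  ext x
  induction x using Fin.cases with
  | zero => simp [Perm.mul_apply, decomposeFin_symm_apply_zero]
  | succ x => simp [Perm.mul_apply, decomposeFin_symm_apply_succ]

lemma L0 {n : ℕ} (e : Perm (Fin n)) :
    decomposeFin.symm (0, e) ^ 2 = 1 ↔ e ^ 2 = 1 := by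
  have done1 : decomposeFin.symm ((0 : Fin (n+1)), (1 : Perm (Fin n))) = 1 := by
    rw [decomposeFin_symm_of_one, Equiv.swap_self]; rfl
  rw [sq, sq, dmul]
  constructor
  · intro h
    rw [← done1] at h
    have := decomposeFin.symm.injective h
    exact (Prod.ext_iff.mp this).2
  · intro h; rw [h, done1]

lemma L1 {n : ℕ} (j : Fin n) (e : Perm (Fin n)) :
    decomposeFin.symm (j.succ, e) ^ 2 = 1 ↔ (e j = j ∧ e ^ 2 = 1) := by
  set g := decomposeFin.symm (j.succ, e) with hg
  have hg0 : g 0 = j.succ := decomposeFin_symm_apply_zero _ _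
  have hgs : ∀ x : Fin n, g x.succ = Equiv.swap 0 j.succ (e x).succ := fun x =>
    decomposeFin_symm_apply_succ _ _ _
  constructor
  · intro h
    have hpt : ∀ x, g (g x) = x := fun x => by
      rw [← Perm.mul_apply, ← sq, h, Perm.one_apply]
    have hj : e j = j := by
      have h0 := hpt 0
      rw [hg0, hgs j] at h0
      have := congrArg (Equiv.swap 0 j.succ) h0
      rw [Equiv.swap_apply_self, Equiv.swap_apply_left] at this
      exact Fin.succ_injective _ this
    refine ⟨hj, Equiv.ext fun x => ?_⟩
    simp only [sq, Perm.mul_apply, Perm.one_apply]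
    by_cases hx : e x = j
    · have h1 := hpt x.succ
      rw [hgs x, hx, Equiv.swap_apply_right, hg0] at h1
      have hxj : x = j := (Fin.succ_injective _ h1).symm
      rw [hx, hj, hxj]
    · have h1 := hpt x.succ
      rw [hgs x, Equiv.swap_apply_of_ne_of_ne (Fin.succ_ne_zero _)
        (fun hc => hx (Fin.succ_injective _ hc)), hgs (e x)] at h1
      by_cases hxx : e (e x) = j
      · rw [hxx, Equiv.swap_apply_right] at h1
        exact absurd h1.symm (Fin.succ_ne_zero _)
      · rw [Equiv.swap_apply_of_ne_of_ne (Fin.succ_ne_zero _)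
          (fun hc => hxx (Fin.succ_injective _ hc))] at h1
        exact Fin.succ_injective _ h1
  · rintro ⟨hj, he⟩
    have he' : ∀ x, e (e x) = x := fun x => by
      rw [← Perm.mul_apply, ← sq, he, Perm.one_apply]
    refine Equiv.ext fun x => ?_
    simp only [sq, Perm.mul_apply, Perm.one_apply]
    induction x using Fin.cases with
    | zero =>
      show g (g 0) = 0
      rw [hg0, hgs j, hj, Equiv.swap_apply_right]
    | succ x =>
      by_cases hx : e x = j
      · have hxj : x = j := by
          have h2 := he' x; rw [hx, hj] at h2; exact h2.symm
        rw [hgs x, hx, Equiv.swap_apply_right, hg0, hxj]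
      · have hxj : x ≠ j := fun hc => hx (by rw [hc, hj])
        rw [hgs x, Equiv.swap_apply_of_ne_of_ne (Fin.succ_ne_zero _)
          (fun hc => hx (Fin.succ_injective _ hc)), hgs (e x), he',
          Equiv.swap_apply_of_ne_of_ne (Fin.succ_ne_zero _)
          (fun hc => hxj (Fin.succ_injective _ hc))]

lemma cardRec (n : ℕ) :
    Nat.card {g : Perm (Fin (n+1)) // g ^ 2 = 1} =
      Nat.card {e : Perm (Fin n) // e ^ 2 = 1}
        + ∑ j : Fin n, Nat.card {e : Perm (Fin n) // e j = j ∧ e ^ 2 = 1} := by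
  classical
  have E1 : {g : Perm (Fin (n+1)) // g ^ 2 = 1} ≃
      {pe : Fin (n+1) × Perm (Fin n) // decomposeFin.symm (pe.1, pe.2) ^ 2 = 1} :=
    Equiv.Perm.decomposeFin.subtypeEquiv (fun g => by rw [Prod.mk.eta, Equiv.symm_apply_apply])
  have E2 : {pe : Fin (n+1) × Perm (Fin n) // decomposeFin.symm (pe.1, pe.2) ^ 2 = 1} ≃
      Σ p : Fin (n+1), {e : Perm (Fin n) // decomposeFin.symm (p, e) ^ 2 = 1} :=
    Equiv.subtypeProdEquivSigmaSubtype (fun p e => decomposeFin.symm (p, e) ^ 2 = 1)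
  rw [Nat.card_congr (E1.trans E2), Nat.card_eq_fintype_card, Fintype.card_sigma,
    Fin.sum_univ_succ]
  have h0 : Fintype.card {e : Perm (Fin n) // decomposeFin.symm ((0 : Fin (n+1)), e) ^ 2 = 1}
      = Nat.card {e : Perm (Fin n) // e ^ 2 = 1} := by
    rw [Nat.card_eq_fintype_card]
    exact Fintype.card_congr (Equiv.subtypeEquivRight (fun e => L0 e))
  rw [h0]
  congr 1
  refine Finset.sum_congr rfl (fun j _ => ?_)
  rw [Nat.card_eq_fintype_card]
  exact Fintype.card_congr (Equiv.subtypeEquivRight (fun e => L1 j e))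

lemma fixCard (n : ℕ) (j : Fin (n+1)) :
    Nat.card {e : Perm (Fin (n+1)) // e j = j ∧ e ^ 2 = 1} =
      Nat.card {e : Perm (Fin n) // e ^ 2 = 1} := by
  classical
  have hcc : Equiv.swap (0 : Fin (n+1)) j * Equiv.swap 0 j = 1 := Equiv.swap_mul_self 0 j
  have cancel : ∀ e : Perm (Fin (n+1)),
      Equiv.swap 0 j * (Equiv.swap 0 j * e * Equiv.swap 0 j) * Equiv.swap 0 j = e := by
    intro e
    simp only [mul_assoc]
    rw [hcc, mul_one, ← mul_assoc, hcc, one_mul]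
  have conj2 : ∀ e : Perm (Fin (n+1)),
      (Equiv.swap 0 j * e * Equiv.swap 0 j) ^ 2 = Equiv.swap 0 j * e ^ 2 * Equiv.swap 0 j := by
    intro e
    simp only [sq, mul_assoc]
    rw [← mul_assoc (Equiv.swap 0 j) (Equiv.swap 0 j) (e * Equiv.swap 0 j), hcc, one_mul]
  have sqiff : ∀ e : Perm (Fin (n+1)),
      (Equiv.swap 0 j * e * Equiv.swap 0 j) ^ 2 = 1 ↔ e ^ 2 = 1 := by
    intro e
    rw [conj2]
    constructor
    · intro h
      calc e ^ 2 = Equiv.swap 0 j * (Equiv.swap 0 j * e ^ 2 * Equiv.swap 0 j) * Equiv.swap 0 j :=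
            (cancel _).symm
        _ = Equiv.swap 0 j * 1 * Equiv.swap 0 j := by rw [h]
        _ = 1 := by rw [mul_one, hcc]
    · intro h; rw [h, mul_one, hcc]
  have E3 : {e : Perm (Fin (n+1)) // e j = j ∧ e ^ 2 = 1} ≃
      {e : Perm (Fin (n+1)) // e 0 = 0 ∧ e ^ 2 = 1} := by
    refine ⟨fun e => ⟨Equiv.swap 0 j * e.1 * Equiv.swap 0 j, ?_, (sqiff _).mpr e.2.2⟩,
      fun e => ⟨Equiv.swap 0 j * e.1 * Equiv.swap 0 j, ?_, (sqiff _).mpr e.2.2⟩,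
      fun e => Subtype.ext (cancel _), fun e => Subtype.ext (cancel _)⟩
    · show Equiv.swap 0 j (e.1 (Equiv.swap 0 j 0)) = 0
      rw [Equiv.swap_apply_left, e.2.1, Equiv.swap_apply_right]
    · show Equiv.swap 0 j (e.1 (Equiv.swap 0 j j)) = j
      rw [Equiv.swap_apply_right, e.2.1, Equiv.swap_apply_left]
  have E4 : {e : Perm (Fin (n+1)) // e 0 = 0 ∧ e ^ 2 = 1} ≃
      {e' : Perm (Fin n) // e' ^ 2 = 1} := by
    have key : ∀ e : Perm (Fin (n+1)), e 0 = 0 →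
        e = decomposeFin.symm (0, (decomposeFin e).2) := by
      intro e he
      have h1 : decomposeFin.symm ((decomposeFin e).1, (decomposeFin e).2) = e := by
        rw [Prod.mk.eta, Equiv.symm_apply_apply]
      have h2 : (decomposeFin e).1 = 0 := by
        rw [← he]
        conv_rhs => rw [← h1]
        rw [decomposeFin_symm_apply_zero]
      rw [← h2]
      exact h1.symm
    refine ⟨fun e => ⟨(decomposeFin e.1).2, ?_⟩,
      fun e' => ⟨decomposeFin.symm (0, e'.1), decomposeFin_symm_apply_zero _ _, (L0 _).mpr e'.2⟩,
      ?_, ?_⟩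
    · exact (L0 _).mp (by rw [← key e.1 e.2.1]; exact e.2.2)
    · rintro ⟨e, he⟩
      exact Subtype.ext (key e he.1).symm
    · rintro ⟨e', he'⟩
      apply Subtype.ext
      show (decomposeFin (decomposeFin.symm (0, e'))).2 = e'
      rw [Equiv.apply_symm_apply]
  exact Nat.card_congr (E3.trans E4)

lemma card0 : Nat.card {g : Perm (Fin 0) // g ^ 2 = 1} = 1 :=
  Nat.card_eq_one_iff_unique.mpr
    ⟨⟨fun a b => Subtype.ext (Subsingleton.elim a.1 b.1)⟩, ⟨⟨1, one_pow 2⟩⟩⟩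

lemma card1 : Nat.card {g : Perm (Fin 1) // g ^ 2 = 1} = 1 :=
  Nat.card_eq_one_iff_unique.mpr
    ⟨⟨fun a b => Subtype.ext (Subsingleton.elim a.1 b.1)⟩, ⟨⟨1, one_pow 2⟩⟩⟩

lemma cardI : ∀ n, Nat.card {g : Perm (Fin n) // g ^ 2 = 1} = I n := by
  have key : ∀ n, Nat.card {g : Perm (Fin n) // g ^ 2 = 1} = I n ∧
      Nat.card {g : Perm (Fin (n+1)) // g ^ 2 = 1} = I (n+1) := by
    intro n
    induction n with
    | zero => exact ⟨card0, card1⟩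
    | succ n ih =>
      refine ⟨ih.2, ?_⟩
      rw [cardRec (n+1)]
      have h : ∀ j : Fin (n+1),
          Nat.card {e : Perm (Fin (n+1)) // e j = j ∧ e ^ 2 = 1} = I n := fun j =>
        (fixCard n j).trans ih.1
      rw [Finset.sum_congr rfl (fun j _ => h j), Finset.sum_const, Finset.card_univ,
        Fintype.card_fin, ih.2, smul_eq_mul]
      rfl
  exact fun n => (key n).1

lemma derivI : ∀ n, iteratedDeriv n f 0 = (I n : ℝ) := by
  have key : ∀ n, iteratedDeriv n f 0 = (I n : ℝ) ∧
      iteratedDeriv (n+1) f 0 = (I (n+1) : ℝ) := by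
    intro n
    induction n with
    | zero =>
      constructor
      · rw [show I 0 = 1 from rfl, Nat.cast_one]; exact base0
      · rw [show I 1 = 1 from rfl, Nat.cast_one]; exact base1
    | succ n ih =>
      refine ⟨ih.2, ?_⟩
      rw [derivRec n, ih.1, ih.2, show I (n+2) = I (n+1) + (n+1) * I n from rfl]
      push_cast; ring
  exact fun n => (key n).1

end InvolutionCountAux

/-- The number of elements in the symmetric group `Sₙ` whose square is the identity
equals `n!` times the coefficient of `uⁿ` in `exp (u + u²/2)`, i.e. it equals the
`n`-th derivative of `u ↦ exp (u + u²/2)` at `0`. -/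
theorem symmetricGroup_involution_count (n : ℕ) :
    (Nat.card {g : Equiv.Perm (Fin n) // g ^ 2 = 1} : ℝ) =
      iteratedDeriv n (fun u : ℝ => Real.exp (u + u ^ 2 / 2)) 0 := by
  rw [InvolutionCountAux.cardI n]
  exact (InvolutionCountAux.derivI n).symm
end

section
/- For partitions lambda, the sum over all partitions of the Schur function s_lambda(x) equals the product over i of (1 - x_i)^{-1} times the product over i < j of (1 - x_i x_j)^{-1}. -/
namespace Littlewood

/-- A (virtual) partition: sequence of row lengths. -/
abbrev Seq := ℕ → ℕ

/-- `Strip μ ν` : `μ ⊆ ν` and `ν/μ` is a horizontal strip. -/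
def Strip (μ ν : Seq) : Prop := ∀ i, μ i ≤ ν i ∧ ν (i + 1) ≤ μ i

lemma Strip.le {μ ν : Seq} (h : Strip μ ν) (i : ℕ) : μ i ≤ ν i := (h i).1
lemma Strip.interlace {μ ν : Seq} (h : Strip μ ν) (i : ℕ) : ν (i+1) ≤ μ i := (h i).2

lemma Strip.anti {μ ν : Seq} (h : Strip μ ν) (hμ : ∀ i, μ (i+1) ≤ μ i) :
    ∀ i, ν (i+1) ≤ ν i := fun i => le_trans (h.interlace i) (h.le i)

lemma strip_refl_of_anti {μ : Seq} (hμ : ∀ i, μ (i+1) ≤ μ i) : Strip μ μ :=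
  fun i => ⟨le_rfl, hμ i⟩

/-- Fomin's local growth rule for RSK. -/
def rule (μ ν ρ : Seq) (a : ℕ) : Seq := fun k =>
  match k with
  | 0 => max (ν 0) (ρ 0) + a
  | k + 1 => max (ν (k+1)) (ρ (k+1)) + (min (ν k) (ρ k) - μ k)

/-- Inverse local rule: partition part. -/
def iruleP (ν ρ lam : Seq) : Seq := fun k =>
  min (ν k) (ρ k) - (lam (k+1) - max (ν (k+1)) (ρ (k+1)))

/-- Inverse local rule: matrix-entry part. -/
def iruleA (ν ρ lam : Seq) : ℕ := lam 0 - max (ν 0) (ρ 0)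

lemma rule_comm (μ ν ρ : Seq) (a : ℕ) : rule μ ν ρ a = rule μ ρ ν a := by
  funext k; cases k <;> simp [rule, max_comm, min_comm]

lemma iruleP_comm (ν ρ lam : Seq) : iruleP ν ρ lam = iruleP ρ ν lam := by
  funext k; simp [iruleP, max_comm, min_comm]

lemma iruleA_comm (ν ρ lam : Seq) : iruleA ν ρ lam = iruleA ρ ν lam := by
  simp [iruleA, max_comm]

lemma rule_strips {μ ν ρ : Seq} (hν : Strip μ ν) (hρ : Strip μ ρ) (a : ℕ) :
    Strip ν (rule μ ν ρ a) ∧ Strip ρ (rule μ ν ρ a) := by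
  constructor <;> intro i <;>
  · constructor
    · cases i with
      | zero => simp [rule]; omega
      | succ k =>
        have h1 := (hν k).1; have h2 := (hρ k).1
        simp [rule]; omega
    · have h1 := (hν i).1; have h2 := (hρ i).1
      have h3 := (hν i).2; have h4 := (hρ i).2
      simp [rule]; omega

/-- `rule μ μ ρ 0 = ρ` when `Strip μ ρ` (used for stabilization). -/
lemma rule_self_left {μ ρ : Seq} (h : Strip μ ρ) : rule μ μ ρ 0 = ρ := by
  funext k
  cases k with
  | zero => have := (h 0).1; simp [rule]; omega
  | succ k =>
    have h1 := (h k).1; have h2 := (h (k+1)).1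
    simp [rule]; omega

lemma irule_spec {ν ρ lam : Seq} (hν : Strip ν lam) (hρ : Strip ρ lam) :
    Strip (iruleP ν ρ lam) ν ∧ Strip (iruleP ν ρ lam) ρ ∧
      rule (iruleP ν ρ lam) ν ρ (iruleA ν ρ lam) = lam := by
  have key : ∀ k, max (ν (k+1)) (ρ (k+1)) ≤ lam (k+1) ∧ lam (k+1) ≤ min (ν k) (ρ k) := by
    intro k
    have := (hν (k+1)).1; have := (hρ (k+1)).1
    have := (hν k).2; have := (hρ k).2
    omega
  refine ⟨?_, ?_, ?_⟩
  · intro i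
    have h1 := key i
    refine ⟨?_, ?_⟩ <;> · simp only [iruleP]; omega
  · intro i
    have h1 := key i
    refine ⟨?_, ?_⟩ <;> · simp only [iruleP]; omega
  · funext k
    cases k with
    | zero =>
      have := (hν 0).1; have := (hρ 0).1
      simp [rule, iruleA]; omega
    | succ k =>
      have h1 := key k
      simp [rule, iruleP]; omega

lemma irule_rule {μ ν ρ : Seq} (hν : Strip μ ν) (hρ : Strip μ ρ) (a : ℕ) :
    iruleP ν ρ (rule μ ν ρ a) = μ ∧ iruleA ν ρ (rule μ ν ρ a) = a := by
  constructor
  · funext k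
    have h1 := (hν k).1; have h2 := (hρ k).1
    have h3 := (hν (k+1)).1; have h4 := (hρ (k+1)).1
    simp [iruleP, rule]; omega
  · simp [iruleA, rule]


section Grid

variable (A : ℕ → ℕ → ℕ)

/-- The RSK growth diagram of the matrix `A`. -/
def grid : ℕ → ℕ → Seq
  | 0, _ => fun _ => 0
  | _ + 1, 0 => fun _ => 0
  | i + 1, j + 1 => rule (grid i j) (grid i (j + 1)) (grid (i + 1) j) (A i j)
  termination_by i j => (i, j)

lemma grid_zero_left' (j : ℕ) : grid A 0 j = fun _ => 0 := by
  cases j <;> rw [grid]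

lemma grid_zero_right' (i : ℕ) : grid A i 0 = fun _ => 0 := by
  cases i <;> rw [grid]

@[simp] lemma grid_zero_left (j k : ℕ) : grid A 0 j k = 0 := by rw [grid_zero_left']

@[simp] lemma grid_zero_right (i k : ℕ) : grid A i 0 k = 0 := by rw [grid_zero_right']

lemma grid_succ (i j : ℕ) :
    grid A (i+1) (j+1) = rule (grid A i j) (grid A i (j+1)) (grid A (i+1) j) (A i j) := by
  rw [grid]

lemma grid_strips : ∀ i j : ℕ,
    Strip (grid A i j) (grid A i (j+1)) ∧ Strip (grid A i j) (grid A (i+1) j) := by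
  have key : ∀ s i j, i + j = s →
      Strip (grid A i j) (grid A i (j+1)) ∧ Strip (grid A i j) (grid A (i+1) j) := by
    intro s
    induction s using Nat.strong_induction_on with
    | _ s ih =>
      intro i j hs
      rcases i with _ | i
      · rcases j with _ | j
        · constructor <;> · intro i; simp
        · constructor
          · intro i; simp
          · -- Strip 0 (grid A 1 (j+1))
            rw [grid_succ]
            have h1 : Strip (grid A 0 j) (grid A 0 (j+1)) ∧ Strip (grid A 0 j) (grid A 1 j) :=
              ih (0 + j) (by omega) 0 j rfl
            exact (rule_strips h1.1 h1.2 (A 0 j)).1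
      · rcases j with _ | j
        · constructor
          · rw [grid_succ]
            have h1 : Strip (grid A i 0) (grid A i 1) ∧ Strip (grid A i 0) (grid A (i+1) 0) :=
              ih (i + 0) (by omega) i 0 rfl
            exact (rule_strips h1.1 h1.2 (A i 0)).2
          · intro k; simp
        · have h1 := ih (i + (j+1)) (by omega) i (j+1) rfl
          have h2 := ih ((i+1) + j) (by omega) (i+1) j rfl
          constructor
          · rw [grid_succ A i (j+1)]
            exact (rule_strips h1.1 h1.2 (A i (j+1))).2
          · rw [grid_succ A (i+1) j]
            exact (rule_strips h2.1 h2.2 (A (i+1) j)).1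
  intro i j; exact key (i+j) i j rfl

lemma grid_strip_right (i j : ℕ) : Strip (grid A i j) (grid A i (j+1)) := (grid_strips A i j).1
lemma grid_strip_down (i j : ℕ) : Strip (grid A i j) (grid A (i+1) j) := (grid_strips A i j).2

lemma grid_transpose : ∀ i j : ℕ, grid (fun p q => A q p) i j = grid A j i := by
  have key : ∀ s i j, i + j = s → grid (fun p q => A q p) i j = grid A j i := by
    intro s
    induction s using Nat.strong_induction_on with
    | _ s ih =>
      intro i j hs
      rcases i with _ | i
      · rw [grid_zero_left', grid_zero_right']
      · rcases j with _ | j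
        · rw [grid_zero_left', grid_zero_right']
        · rw [grid_succ, grid_succ]
          rw [ih (i + j) (by omega) i j rfl, ih (i + (j+1)) (by omega) i (j+1) rfl,
            ih ((i+1) + j) (by omega) (i+1) j rfl]
          exact rule_comm _ _ _ _
  intro i j; exact key (i+j) i j rfl

/-- Vanishing: `grid A i j` has at most `min i j` rows. -/
lemma grid_vanish : ∀ i j r : ℕ, min i j ≤ r → grid A i j r = 0 := by
  have key : ∀ s i j r, i + j = s → min i j ≤ r → grid A i j r = 0 := by
    intro s
    induction s using Nat.strong_induction_on with
    | _ s ih =>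
      intro i j r hs hr
      rcases i with _ | i
      · simp
      · rcases j with _ | j
        · simp
        · rw [grid_succ]
          rcases r with _ | r
          · omega
          · have hν : grid A i (j+1) (r+1) = 0 := ih (i + (j+1)) (by omega) i (j+1) (r+1) rfl (by omega)
            have hρ : grid A (i+1) j (r+1) = 0 := ih ((i+1) + j) (by omega) (i+1) j (r+1) rfl (by omega)
            have hμ : grid A i j r = 0 := ih (i + j) (by omega) i j r rfl (by omega)
            have hmin : min (grid A i (j+1) r) (grid A (i+1) j r) = 0 := by
              rcases Nat.lt_or_ge r i with h | h
              · have : grid A (i+1) j r = 0 := ih ((i+1)+j) (by omega) (i+1) j r rfl (by omega)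
                omega
              · have : grid A i (j+1) r = 0 := ih (i+(j+1)) (by omega) i (j+1) r rfl (by omega)
                omega
            simp only [rule, hν, hρ, hμ, hmin]
            omega
  intro i j r h; exact key (i+j) i j r rfl h

/-- If column `j` of `A` is zero, the grid stabilizes from column `j` to `j+1`. -/
lemma grid_stab_col (j : ℕ) (hA : ∀ i, A i j = 0) (i : ℕ) :
    grid A i (j+1) = grid A i j := by
  induction i with
  | zero => rw [grid_zero_left', grid_zero_left']
  | succ i ihi =>
    rw [grid_succ, ihi, hA]
    exact rule_self_left (grid_strip_down A i j)

end Grid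

section Backward

/-- A chain of horizontal strips of length `n`, stabilized beyond `n`. -/
structure IsChain (n : ℕ) (c : ℕ → Seq) : Prop where
  zero : ∀ r, c 0 r = 0
  strip : ∀ k, Strip (c k) (c (k + 1))
  stab : ∀ k, n ≤ k → c k = c n

lemma IsChain.anti {n : ℕ} {c : ℕ → Seq} (hc : IsChain n c) (k : ℕ) :
    ∀ r, c k (r + 1) ≤ c k r := by
  induction k with
  | zero => intro r; simp [hc.zero]
  | succ k ih => exact (hc.strip k).anti ih

lemma IsChain.rows {n : ℕ} {c : ℕ → Seq} (hc : IsChain n c) :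
    ∀ k r, k ≤ r → c k r = 0 := by
  intro k
  induction k with
  | zero => intro r _; exact hc.zero r
  | succ k ih =>
    intro r hr
    rcases r with _ | r
    · omega
    · have h := (hc.strip k).interlace r
      have := ih r (by omega)
      omega

variable (n : ℕ) (c : ℕ → Seq)

/-- The backward (inverse) growth grid built from a single chain `c` on both edges. -/
def bgrid : ℕ → ℕ → Seq
  | i, j =>
    if n ≤ i then c j
    else if n ≤ j then c i
    else iruleP (bgrid i (j + 1)) (bgrid (i + 1) j) (bgrid (i + 1) (j + 1))
  termination_by i j => (n - i) + (n - j)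
  decreasing_by all_goals omega

lemma bgrid_left {i j : ℕ} (h : n ≤ i) : bgrid n c i j = c j := by
  rw [bgrid]; simp [h]

lemma bgrid_right {i j : ℕ} (h : i < n) (h2 : n ≤ j) : bgrid n c i j = c i := by
  rw [bgrid]; simp [h, h2, Nat.not_le_of_lt h]

lemma bgrid_inner {i j : ℕ} (h : i < n) (h2 : j < n) :
    bgrid n c i j = iruleP (bgrid n c i (j+1)) (bgrid n c (i+1) j) (bgrid n c (i+1) (j+1)) := by
  conv_lhs => rw [bgrid]
  simp [Nat.not_le_of_lt h, Nat.not_le_of_lt h2]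

variable {n c}

lemma bgrid_strips (hc : IsChain n c) : ∀ i j : ℕ,
    Strip (bgrid n c i j) (bgrid n c i (j+1)) ∧ Strip (bgrid n c i j) (bgrid n c (i+1) j) := by
  have key : ∀ s i j, (n - i) + (n - j) = s →
      Strip (bgrid n c i j) (bgrid n c i (j+1)) ∧ Strip (bgrid n c i j) (bgrid n c (i+1) j) := by
    intro s
    induction s using Nat.strong_induction_on with
    | _ s ih =>
      intro i j hs
      rcases Nat.lt_or_ge i n with hi | hi
      · rcases Nat.lt_or_ge j n with hj | hj
        · -- inner
          have h1 := ih ((n-i) + (n-(j+1))) (by omega) i (j+1) rfl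
          have h2 := ih ((n-(i+1)) + (n-j)) (by omega) (i+1) j rfl
          have hspec := irule_spec h1.2 h2.1
          rw [bgrid_inner n c hi hj]
          exact ⟨hspec.1, hspec.2.1⟩
        · -- i < n ≤ j
          rw [bgrid_right n c hi hj]
          constructor
          · rw [bgrid_right n c hi (by omega)]
            exact strip_refl_of_anti (hc.anti i)
          · rcases Nat.lt_or_ge (i+1) n with hi1 | hi1
            · rw [bgrid_right n c hi1 hj]; exact hc.strip i
            · rw [bgrid_left n c hi1, hc.stab j hj]
              have : i + 1 = n := by omega
              rw [← this]
              exact hc.strip i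
      · rw [bgrid_left n c hi]
        constructor
        · rw [bgrid_left n c hi]; exact hc.strip j
        · rw [bgrid_left n c (by omega)]
          exact strip_refl_of_anti (hc.anti j)
  intro i j; exact key ((n-i)+(n-j)) i j rfl

lemma bgrid_vanish (hc : IsChain n c) : ∀ i j r : ℕ, min i j ≤ r → bgrid n c i j r = 0 := by
  have key : ∀ s i j r, (n - i) + (n - j) = s → min i j ≤ r → bgrid n c i j r = 0 := by
    intro s
    induction s using Nat.strong_induction_on with
    | _ s ih =>
      intro i j r hs hr
      rcases Nat.lt_or_ge i n with hi | hi
      · rcases Nat.lt_or_ge j n with hj | hj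
        · rw [bgrid_inner n c hi hj]
          have hν : min i (j+1) ≤ r → bgrid n c i (j+1) r = 0 :=
            ih ((n-i) + (n-(j+1))) (by omega) i (j+1) r rfl
          have hρ : min (i+1) j ≤ r → bgrid n c (i+1) j r = 0 :=
            ih ((n-(i+1)) + (n-j)) (by omega) (i+1) j r rfl
          have : min (bgrid n c i (j+1) r) (bgrid n c (i+1) j r) = 0 := by
            rcases le_or_gt i j with h | h
            · rw [hν (by omega)]; omega
            · rw [hρ (by omega)]; omega
          simp only [iruleP]
          omega
        · rw [bgrid_right n c hi hj]
          exact hc.rows i r (by omega)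
      · rw [bgrid_left n c hi]
        rcases le_or_gt j n with h | h
        · exact hc.rows j r (by omega)
        · rw [hc.stab j (by omega)]
          exact hc.rows n r (by omega)
  intro i j r h; exact key ((n-i)+(n-j)) i j r rfl h

lemma bgrid_symm (hc : IsChain n c) : ∀ i j : ℕ, bgrid n c i j = bgrid n c j i := by
  have key : ∀ s i j, (n - i) + (n - j) = s → bgrid n c i j = bgrid n c j i := by
    intro s
    induction s using Nat.strong_induction_on with
    | _ s ih =>
      intro i j hs
      rcases Nat.lt_or_ge i n with hi | hi
      · rcases Nat.lt_or_ge j n with hj | hj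
        · rw [bgrid_inner n c hi hj, bgrid_inner n c hj hi]
          rw [ih _ (by omega) i (j+1) rfl, ih _ (by omega) (i+1) j rfl,
            ih _ (by omega) (i+1) (j+1) rfl]
          exact iruleP_comm _ _ _
        · rw [bgrid_right n c hi hj, bgrid_left n c hj]
      · rcases Nat.lt_or_ge j n with hj | hj
        · rw [bgrid_left n c hi, bgrid_right n c hj hi]
        · rw [bgrid_left n c hi, bgrid_left n c hj, hc.stab i hi, hc.stab j hj]
  intro i j; exact key ((n-i)+(n-j)) i j rfl

/-- The matrix extracted from the backward grid. -/
def bmat (n : ℕ) (c : ℕ → Seq) (i j : ℕ) : ℕ :=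
  if i < n ∧ j < n then
    iruleA (bgrid n c i (j+1)) (bgrid n c (i+1) j) (bgrid n c (i+1) (j+1))
  else 0

lemma bmat_symm (hc : IsChain n c) (i j : ℕ) : bmat n c i j = bmat n c j i := by
  unfold bmat
  rcases Nat.lt_or_ge i n with hi | hi
  · rcases Nat.lt_or_ge j n with hj | hj
    · simp only [hi, hj, and_self, if_true]
      rw [bgrid_symm hc i (j+1), bgrid_symm hc (i+1) j, bgrid_symm hc (i+1) (j+1)]
      exact iruleA_comm _ _ _
    · simp [Nat.not_lt_of_ge hj]
  · simp [Nat.not_lt_of_ge hi]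

/-- Forward grid of the extracted matrix agrees with the backward grid (below `n`). -/
lemma grid_bmat (hc : IsChain n c) : ∀ i j : ℕ, i ≤ n → j ≤ n →
    grid (bmat n c) i j = bgrid n c i j := by
  have key : ∀ s i j, i + j = s → i ≤ n → j ≤ n → grid (bmat n c) i j = bgrid n c i j := by
    intro s
    induction s using Nat.strong_induction_on with
    | _ s ih =>
      intro i j hs hi hj
      rcases i with _ | i
      · rw [grid_zero_left']
        funext r
        rw [bgrid_vanish hc 0 j r (by omega)]
      · rcases j with _ | j
        · rw [grid_zero_right']
          funext r
          rw [bgrid_vanish hc (i+1) 0 r (by omega)]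
        · rw [grid_succ,
            ih (i + j) (by omega) i j rfl (by omega) (by omega),
            ih (i + (j+1)) (by omega) i (j+1) rfl (by omega) (by omega),
            ih ((i+1) + j) (by omega) (i+1) j rfl (by omega) (by omega)]
          have h1 := bgrid_strips hc i (j+1)
          have h2 := bgrid_strips hc (i+1) j
          have hspec := irule_spec h1.2 h2.1
          rw [bgrid_inner n c (by omega) (by omega)]
          have hb : bmat n c i j =
              iruleA (bgrid n c i (j+1)) (bgrid n c (i+1) j) (bgrid n c (i+1) (j+1)) := by
            have : i < n ∧ j < n := ⟨by omega, by omega⟩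
            simp [bmat, this]
          rw [hb]
          exact hspec.2.2
  intro i j hi hj; exact key (i+j) i j rfl hi hj

end Backward

section Bijection

variable {n : ℕ}

lemma grid_stab_ge {A : ℕ → ℕ → ℕ} (hA : ∀ i j, n ≤ j → A i j = 0) :
    ∀ i k, n ≤ k → grid A i k = grid A i n := by
  intro i k hk
  induction k with
  | zero => have : n = 0 := by omega
            rw [this]
  | succ k ihk =>
    rcases Nat.lt_or_ge k n with h | h
    · have : k + 1 = n := by omega
      rw [this]
    · rw [grid_stab_col A k (fun i => hA i k h) i, ihk h]

variable (n)

/-- Symmetric matrices supported in `[0,n) × [0,n)`. -/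
def MatS := {A : ℕ → ℕ → ℕ // (∀ i j, A i j = A j i) ∧ ∀ i j, n ≤ i ∨ n ≤ j → A i j = 0}

/-- Chains of length `n`. -/
def ChainT := {c : ℕ → Seq // IsChain n c}

variable {n}

lemma isChain_grid {A : ℕ → ℕ → ℕ} (hsupp : ∀ i j, n ≤ i ∨ n ≤ j → A i j = 0) :
    IsChain n (fun k => grid A n k) where
  zero := fun r => by simp
  strip := fun k => grid_strip_right A n k
  stab := fun k hk => grid_stab_ge (fun i j hj => hsupp i j (Or.inr hj)) n k hk

lemma transpose_eq {A : ℕ → ℕ → ℕ} (hsym : ∀ i j, A i j = A j i) :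
    (fun p q => A q p) = A := by
  funext p q; exact hsym q p

lemma bgrid_grid {A : ℕ → ℕ → ℕ} (hsym : ∀ i j, A i j = A j i)
    (hsupp : ∀ i j, n ≤ i ∨ n ≤ j → A i j = 0) :
    ∀ i j, i ≤ n → j ≤ n → bgrid n (fun k => grid A n k) i j = grid A i j := by
  have hc : IsChain n (fun k => grid A n k) := isChain_grid hsupp
  have key : ∀ s i j, (n - i) + (n - j) = s → i ≤ n → j ≤ n →
      bgrid n (fun k => grid A n k) i j = grid A i j := by
    intro s
    induction s using Nat.strong_induction_on with
    | _ s ih =>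
      intro i j hs hi hj
      rcases Nat.lt_or_ge i n with hi' | hi'
      · rcases Nat.lt_or_ge j n with hj' | hj'
        · rw [bgrid_inner n _ hi' hj',
            ih _ (by omega) i (j+1) rfl (by omega) (by omega),
            ih _ (by omega) (i+1) j rfl (by omega) (by omega),
            ih _ (by omega) (i+1) (j+1) rfl (by omega) (by omega),
            grid_succ]
          exact (irule_rule (grid_strip_right A i j) (grid_strip_down A i j) (A i j)).1
        · have hj'' : j = n := by omega
          rw [bgrid_right n _ hi' hj', hj'']
          calc grid A n i = grid (fun p q => A q p) i n := (grid_transpose A i n).symm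
          _ = grid A i n := by rw [transpose_eq hsym]
      · have : i = n := by omega
        rw [bgrid_left n _ hi', this]
  intro i j; exact key ((n-i)+(n-j)) i j rfl

/-- Forward map: a symmetric supported matrix to its bottom-edge chain. -/
def toChain (A : MatS n) : ChainT n :=
  ⟨fun k => grid A.1 n k, isChain_grid A.2.2⟩

/-- Backward map. -/
def toMat (c : ChainT n) : MatS n :=
  ⟨bmat n c.1, fun i j => bmat_symm c.2 i j, fun i j h => by
    unfold bmat
    rcases h with h | h <;> simp [Nat.not_lt_of_ge h]⟩

lemma toMat_toChain (A : MatS n) : toMat (toChain A) = A := by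
  obtain ⟨A, hsym, hsupp⟩ := A
  apply Subtype.ext
  funext i j
  show bmat n (fun k => grid A n k) i j = A i j
  unfold bmat
  rcases Nat.lt_or_ge i n with hi | hi
  · rcases Nat.lt_or_ge j n with hj | hj
    · simp only [hi, hj, and_self, if_true]
      rw [bgrid_grid hsym hsupp i (j+1) (by omega) (by omega),
        bgrid_grid hsym hsupp (i+1) j (by omega) (by omega),
        bgrid_grid hsym hsupp (i+1) (j+1) (by omega) (by omega),
        grid_succ]
      exact (irule_rule (grid_strip_right A i j) (grid_strip_down A i j) (A i j)).2
    · rw [hsupp i j (Or.inr hj)]; simp [Nat.not_lt_of_ge hj]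
  · rw [hsupp i j (Or.inl hi)]; simp [Nat.not_lt_of_ge hi]

lemma toChain_toMat (c : ChainT n) : toChain (toMat c) = c := by
  obtain ⟨c, hc⟩ := c
  apply Subtype.ext
  funext k
  show grid (bmat n c) n k = c k
  rcases Nat.le_or_ge k n with hk | hk
  · rw [grid_bmat hc n k le_rfl hk, bgrid_left n c le_rfl]
  · have hsupp : ∀ i j, n ≤ j → bmat n c i j = 0 := by
      intro i j hj; unfold bmat; simp [Nat.not_lt_of_ge hj]
    rw [grid_stab_ge hsupp n k hk, grid_bmat hc n n le_rfl le_rfl,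
      bgrid_left n c le_rfl, hc.stab k hk]

/-- The growth-diagram bijection between symmetric matrices and strip chains. -/
def matChainEquiv : MatS n ≃ ChainT n where
  toFun := toChain
  invFun := toMat
  left_inv := toMat_toChain
  right_inv := toChain_toMat

end Bijection

section Size

/-- Truncated size of a sequence. -/
def sz (N : ℕ) (f : Seq) : ℕ := ∑ r ∈ Finset.range N, f r

lemma sz_rule {μ ν ρ : Seq} (hν : Strip μ ν) (hρ : Strip μ ρ) (a : ℕ) {m : ℕ}
    (hνm : ν m = 0) (hρm : ρ m = 0) :
    sz (m+1) (rule μ ν ρ a) + sz (m+1) μ = a + sz (m+1) ν + sz (m+1) ρ := by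
  have hμm : μ m = 0 := by have := (hν m).1; omega
  unfold sz
  rw [Finset.sum_range_succ' (rule μ ν ρ a)]
  have hr0 : rule μ ν ρ a 0 = max (ν 0) (ρ 0) + a := rfl
  have hrS : ∀ r, rule μ ν ρ a (r+1) = max (ν (r+1)) (ρ (r+1)) + (min (ν r) (ρ r) - μ r) := by
    intro r; rfl
  simp only [hr0, hrS]
  rw [Finset.sum_add_distrib]
  have e1 : ∑ r ∈ Finset.range m, (min (ν r) (ρ r) - μ r) + ∑ r ∈ Finset.range (m+1), μ r
      = ∑ r ∈ Finset.range (m+1), min (ν r) (ρ r) := by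
    rw [Finset.sum_range_succ μ, hμm, Finset.sum_range_succ (fun r => min (ν r) (ρ r))]
    rw [hνm, hρm]
    simp only [Nat.add_zero, Nat.min_self]
    rw [← Finset.sum_add_distrib]
    apply Finset.sum_congr rfl
    intro r _
    have := (hν r).1; have := (hρ r).1
    omega
  have e2 : ∑ r ∈ Finset.range m, max (ν (r+1)) (ρ (r+1)) + max (ν 0) (ρ 0)
      = ∑ r ∈ Finset.range (m+1), max (ν r) (ρ r) := by
    rw [Finset.sum_range_succ' (fun r => max (ν r) (ρ r))]
  have e3 : ∑ r ∈ Finset.range (m+1), max (ν r) (ρ r) + ∑ r ∈ Finset.range (m+1), min (ν r) (ρ r)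
      = ∑ r ∈ Finset.range (m+1), ν r + ∑ r ∈ Finset.range (m+1), ρ r := by
    rw [← Finset.sum_add_distrib, ← Finset.sum_add_distrib]
    apply Finset.sum_congr rfl
    intro r _
    omega
  omega

lemma sz_grid_col {n : ℕ} {A : ℕ → ℕ → ℕ} (hsupp : ∀ i j, n ≤ i ∨ n ≤ j → A i j = 0)
    {k : ℕ} (hk : k < n) :
    ∀ i, i ≤ n → sz n (grid A i (k+1)) = sz n (grid A i k) + ∑ i' ∈ Finset.range i, A i' k := by
  intro i
  induction i with
  | zero =>
    intro _
    simp [sz]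
  | succ i ih =>
    intro hi
    have hi' : i ≤ n := by omega
    have hn : n = (n - 1) + 1 := by omega
    have hν : grid A i (k+1) (n-1) = 0 := grid_vanish A i (k+1) (n-1) (by omega)
    have hρ : grid A (i+1) k (n-1) = 0 := grid_vanish A (i+1) k (n-1) (by omega)
    have hrule := sz_rule (grid_strip_right A i k) (grid_strip_down A i k) (A i k) hν hρ
    rw [← hn] at hrule
    rw [grid_succ] at *
    rw [Finset.sum_range_succ]
    have := ih hi'
    omega

end Size

section TabChain

lemma le_of_lt_imp {a b : ℕ} (h : ∀ j, j < a → j < b) : a ≤ b := by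
  by_contra hc
  push_neg at hc
  exact lt_irrefl b (h b hc)

lemma lower_eq_range (s : Finset ℕ) (h : ∀ a b, a ≤ b → b ∈ s → a ∈ s) :
    s = Finset.range s.card := by
  ext a
  simp only [Finset.mem_range]
  constructor
  · intro ha
    have hsub : Finset.range (a+1) ⊆ s := fun b hb =>
      h b a (by simpa [Nat.lt_succ_iff] using hb) ha
    have := Finset.card_le_card hsub
    simpa using this
  · intro ha
    by_contra h'
    have hsub : s ⊆ Finset.range a := by
      intro b hb
      simp only [Finset.mem_range]
      by_contra hb'
      exact h' (h a b (by omega) hb)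
    have := Finset.card_le_card hsub
    simp at this
    omega

lemma filter_lt_range (a b : ℕ) : (Finset.range b).filter (fun j => j < a) = Finset.range (min a b) := by
  ext j
  simp only [Finset.mem_filter, Finset.mem_range]
  omega

variable {μ : YoungDiagram} (T : SemistandardYoungTableau μ)

/-- The chain of a tableau: `tabChain T k i` = number of entries `< k` in row `i`. -/
def tabChain (k i : ℕ) : ℕ := ((Finset.range (μ.rowLen i)).filter (fun j => T i j < k)).card

lemma tc_filter_eq (k i : ℕ) :
    (Finset.range (μ.rowLen i)).filter (fun j => T i j < k) = Finset.range (tabChain T k i) := by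
  apply lower_eq_range
  intro a b hab hb
  simp only [Finset.mem_filter, Finset.mem_range] at hb ⊢
  refine ⟨by omega, ?_⟩
  have hcell : (i, b) ∈ μ := YoungDiagram.mem_iff_lt_rowLen.2 hb.1
  have := T.row_weak_of_le hab hcell
  omega

lemma tc_lt_iff {k i j : ℕ} : j < tabChain T k i ↔ j < μ.rowLen i ∧ T i j < k := by
  rw [← Finset.mem_range, ← tc_filter_eq]
  simp [Finset.mem_filter]

lemma isChain_tabChain {n : ℕ} (hT : ∀ i j, T i j < n) : IsChain n (tabChain T) where
  zero := fun i => by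
    simp [tabChain]
  strip := fun k => by
    intro i
    constructor
    · apply Finset.card_le_card
      intro j hj
      simp only [Finset.mem_filter, Finset.mem_range] at hj ⊢
      exact ⟨hj.1, by omega⟩
    · apply le_of_lt_imp
      intro j hj
      rw [tc_lt_iff] at hj ⊢
      have hcell : (i+1, j) ∈ μ := YoungDiagram.mem_iff_lt_rowLen.2 hj.1
      have h1 : (i, j) ∈ μ := YoungDiagram.mem_iff_lt_rowLen.2 (by
        have := μ.rowLen_anti i (i+1) (by omega); omega)
      have h2 := T.col_strict (show i < i + 1 by omega) hcell
      refine ⟨YoungDiagram.mem_iff_lt_rowLen.1 h1, by omega⟩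
  stab := fun k hk => by
    funext i
    have h1 : ∀ m, n ≤ m → tabChain T m i = μ.rowLen i := by
      intro m hm
      unfold tabChain
      rw [Finset.filter_true_of_mem, Finset.card_range]
      intro j _
      have := hT i j
      omega
    rw [h1 k hk, h1 n le_rfl]

variable {n : ℕ} {c : ℕ → Seq}

lemma IsChain.mono_k (hc : IsChain n c) {k1 k2 i : ℕ} (h : k1 ≤ k2) : c k1 i ≤ c k2 i := by
  induction k2, h using Nat.le_induction with
  | base => exact le_refl _
  | succ k2 hk ih => exact le_trans ih ((hc.strip k2).le i)

lemma IsChain.anti_le (hc : IsChain n c) {k i1 i2 : ℕ} (h : i1 ≤ i2) : c k i2 ≤ c k i1 := by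
  induction i2, h using Nat.le_induction with
  | base => exact le_refl _
  | succ i2 hk ih => exact le_trans (hc.anti k i2) ih

/-- The Young diagram of a chain. -/
def chainShape (n : ℕ) (c : ℕ → Seq) (hc : IsChain n c) : YoungDiagram where
  cells := (Finset.range n ×ˢ Finset.range (c n 0 + 1)).filter (fun p => p.2 < c n p.1)
  isLowerSet := by
    intro p q hq hp
    simp only [Finset.coe_filter, Set.mem_setOf_eq, Finset.mem_product, Finset.mem_range] at hp ⊢
    obtain ⟨⟨h1, h2⟩, h3⟩ := hp
    have hq1 : q.1 ≤ p.1 := hq.1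
    have hq2 : q.2 ≤ p.2 := hq.2
    have hle := hc.anti_le (k := n) hq1
    exact ⟨⟨by omega, by omega⟩, by omega⟩

lemma mem_chainShape (hc : IsChain n c) {i j : ℕ} :
    (i, j) ∈ chainShape n c hc ↔ j < c n i := by
  show (i, j) ∈ Finset.filter _ _ ↔ _
  simp only [Finset.mem_filter, Finset.mem_product, Finset.mem_range]
  constructor
  · tauto
  · intro h
    have h1 : i < n := by
      by_contra h'
      rw [hc.rows n i (by omega)] at h
      omega
    have h2 := hc.anti_le (k := n) (Nat.zero_le i)
    exact ⟨⟨h1, by omega⟩, h⟩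

/-- Entry of the tableau associated to a chain. -/
def chainEntry (n : ℕ) (c : ℕ → Seq) (i j : ℕ) : ℕ :=
  if j < c n i then ((Finset.range n).filter (fun m => c (m+1) i ≤ j)).card else 0

lemma ce_filter_eq (hc : IsChain n c) (i j : ℕ) :
    (Finset.range n).filter (fun m => c (m+1) i ≤ j) =
      Finset.range (((Finset.range n).filter (fun m => c (m+1) i ≤ j)).card) := by
  apply lower_eq_range
  intro a b hab hb
  simp only [Finset.mem_filter, Finset.mem_range] at hb ⊢
  have := hc.mono_k (i := i) (show a + 1 ≤ b + 1 by omega)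
  exact ⟨by omega, by omega⟩

lemma ce_lt_iff (hc : IsChain n c) {i j m : ℕ} (hcell : j < c n i) :
    m < chainEntry n c i j ↔ m < n ∧ c (m+1) i ≤ j := by
  rw [chainEntry, if_pos hcell, ← Finset.mem_range, ← ce_filter_eq hc]
  simp [Finset.mem_filter]

lemma ce_lt_n (hc : IsChain n c) {i j : ℕ} (hcell : j < c n i) (hn : 0 < n) :
    chainEntry n c i j < n := by
  by_contra h
  push_neg at h
  have := (ce_lt_iff hc hcell (m := n - 1)).1 (by omega)
  have hn' : n - 1 + 1 = n := by omega
  rw [hn'] at this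
  omega

lemma ce_le (hc : IsChain n c) {i j : ℕ} (hcell : j < c n i) :
    c (chainEntry n c i j) i ≤ j := by
  rcases Nat.eq_zero_or_pos (chainEntry n c i j) with h | h
  · rw [h, hc.zero]; omega
  · have := (ce_lt_iff hc hcell (m := chainEntry n c i j - 1)).1 (by omega)
    have h' : chainEntry n c i j - 1 + 1 = chainEntry n c i j := by omega
    rw [h'] at this
    exact this.2

lemma lt_ce_succ (hc : IsChain n c) {i j : ℕ} (hcell : j < c n i) (hn : 0 < n) :
    j < c (chainEntry n c i j + 1) i := by
  have h1 := ce_lt_n hc hcell hn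
  by_contra h
  push_neg at h
  have := (ce_lt_iff hc hcell (m := chainEntry n c i j)).2 ⟨h1, h⟩
  omega

/-- `chainEntry < k ↔ j < c k i`, on cells. -/
lemma ce_lt_level_iff (hc : IsChain n c) {i j k : ℕ} (hcell : j < c n i) (hn : 0 < n) :
    chainEntry n c i j < k ↔ j < c k i := by
  constructor
  · intro h
    have := lt_ce_succ hc hcell hn
    calc j < c (chainEntry n c i j + 1) i := this
    _ ≤ c k i := hc.mono_k (by omega)
  · intro h
    by_contra h'
    push_neg at h'
    have := ce_le hc hcell
    have := hc.mono_k (i := i) h'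
    omega

/-- The tableau of a chain. -/
def chainTab (n : ℕ) (c : ℕ → Seq) (hc : IsChain n c) (hn : 0 < n) :
    SemistandardYoungTableau (chainShape n c hc) where
  entry := chainEntry n c
  row_weak' := by
    intro i j1 j2 hj hcell
    rw [mem_chainShape hc] at hcell
    have hcell1 : j1 < c n i := by omega
    unfold chainEntry
    rw [if_pos hcell1, if_pos hcell]
    apply Finset.card_le_card
    intro m hm
    simp only [Finset.mem_filter, Finset.mem_range] at hm ⊢
    exact ⟨hm.1, by omega⟩
  col_strict' := by
    intro i1 i2 j hi hcell
    rw [mem_chainShape hc] at hcell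
    have hcell1 : j < c n i1 := lt_of_lt_of_le hcell (hc.anti_le (by omega))
    set e1 := chainEntry n c i1 j with he1
    set e2 := chainEntry n c i2 j with he2
    by_contra h
    push_neg at h
    -- h : e2 ≤ e1
    have k1 : c e1 i1 ≤ j := ce_le hc hcell1
    have k2 : j < c (e2+1) i2 := lt_ce_succ hc hcell hn
    have k3 : c (e2+1) i2 ≤ c (e2+1) (i1+1) := hc.anti_le (by omega)
    have k4 : c (e2+1) (i1+1) ≤ c e2 i1 := (hc.strip e2).interlace i1
    have k5 : c e2 i1 ≤ c e1 i1 := hc.mono_k h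
    omega
  zeros' := by
    intro i j hcell
    rw [mem_chainShape hc] at hcell
    rw [chainEntry, if_neg hcell]

end TabChain

section TabEquiv

variable (n : ℕ)

/-- Semistandard Young tableaux (of arbitrary shape) with all entries `< n`. -/
def TabN := {y : Σ μ : YoungDiagram, SemistandardYoungTableau μ // ∀ i j, y.2 i j < n}

lemma sigma_tab_ext {μ μ' : YoungDiagram} (T : SemistandardYoungTableau μ)
    (T' : SemistandardYoungTableau μ') (h : μ = μ') (hent : ∀ i j, T i j = T' i j) :
    (⟨μ, T⟩ : Σ ν : YoungDiagram, SemistandardYoungTableau ν) = ⟨μ', T'⟩ := by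
  subst h
  exact congrArg (Sigma.mk μ) (SemistandardYoungTableau.ext hent)

variable {n}

/-- Forward: tableau to chain. -/
def tabToChain (hn : 0 < n) (y : TabN n) : ChainT n :=
  ⟨tabChain y.1.2, isChain_tabChain y.1.2 y.2⟩

/-- Backward: chain to tableau. -/
def chainToTab (hn : 0 < n) (c : ChainT n) : TabN n :=
  ⟨⟨chainShape n c.1 c.2, chainTab n c.1 c.2 hn⟩, by
    intro i j
    show chainEntry n c.1 i j < n
    rcases Nat.lt_or_ge j (c.1 n i) with h | h
    · exact ce_lt_n c.2 h hn
    · rw [chainEntry, if_neg (by omega)]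
      omega⟩

lemma tabToChain_chainToTab (hn : 0 < n) (c : ChainT n) :
    tabToChain hn (chainToTab hn c) = c := by
  obtain ⟨c, hc⟩ := c
  apply Subtype.ext
  funext k i
  show tabChain (chainTab n c hc hn) k i = c k i
  unfold tabChain
  have hrl : (chainShape n c hc).rowLen i = c n i := by
    rcases Nat.eq_zero_or_pos (c n i) with h | h
    · rw [h]
      by_contra h'
      have : 0 < (chainShape n c hc).rowLen i := by omega
      have := YoungDiagram.mem_iff_lt_rowLen.2 this
      rw [mem_chainShape hc] at this
      omega
    · have h1 : ((i, c n i - 1) ∈ chainShape n c hc) := (mem_chainShape hc).2 (by omega)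
      have h2 : ¬((i, c n i) ∈ chainShape n c hc) := by
        rw [mem_chainShape hc]; omega
      rw [YoungDiagram.mem_iff_lt_rowLen] at h1 h2
      omega
  rw [hrl]
  have hfe : (Finset.range (c n i)).filter (fun j => chainTab n c hc hn i j < k) =
      (Finset.range (c n i)).filter (fun j => j < c k i) := by
    apply Finset.filter_congr
    intro j hj
    simp only [Finset.mem_range] at hj
    show chainTab n c hc hn i j < k ↔ j < c k i
    exact ce_lt_level_iff hc hj hn
  rw [hfe, filter_lt_range]
  rw [Finset.card_range]
  rcases Nat.le_or_ge k n with h | h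
  · exact min_eq_left (hc.mono_k h)
  · rw [hc.stab k h]
    exact min_eq_left le_rfl

lemma chainToTab_tabToChain (hn : 0 < n) (y : TabN n) :
    chainToTab hn (tabToChain hn y) = y := by
  obtain ⟨⟨μ, T⟩, hy0⟩ := y
  apply Subtype.ext
  have hy : ∀ i j, T i j < n := hy0
  have hc : IsChain n (tabChain T) := isChain_tabChain T hy
  have htop : ∀ i, tabChain T n i = μ.rowLen i := by
    intro i
    unfold tabChain
    rw [Finset.filter_true_of_mem, Finset.card_range]
    intro j _
    exact hy i j
  have hshape : chainShape n (tabChain T) hc = μ := by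
    apply SetLike.ext
    rintro ⟨i, j⟩
    rw [mem_chainShape hc, htop i, YoungDiagram.mem_iff_lt_rowLen]
  apply sigma_tab_ext _ _ hshape
  intro i j
  show chainEntry n (tabChain T) i j = T i j
  rcases Nat.lt_or_ge j (tabChain T n i) with hcell | hcell
  · -- on a cell
    have hcell' : (i, j) ∈ μ := by
      rw [YoungDiagram.mem_iff_lt_rowLen]
      rw [htop i] at hcell
      exact hcell
    rw [chainEntry, if_pos hcell]
    have hfe : (Finset.range n).filter (fun m => tabChain T (m+1) i ≤ j) =
        (Finset.range n).filter (fun m => m < T i j) := by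
      apply Finset.filter_congr
      intro m _
      constructor
      · intro h
        by_contra h'
        push_neg at h'
        have : j < tabChain T (m+1) i := by
          rw [tc_lt_iff]
          exact ⟨YoungDiagram.mem_iff_lt_rowLen.1 hcell', by omega⟩
        omega
      · intro h
        by_contra h'
        push_neg at h'
        rw [tc_lt_iff] at h'
        omega
    rw [hfe, filter_lt_range, Finset.card_range]
    exact min_eq_left (by have := hy i j; omega)
  · -- off cell
    have hcell' : (i, j) ∉ μ := by
      rw [YoungDiagram.mem_iff_lt_rowLen]
      rw [htop i] at hcell
      omega
    rw [chainEntry, if_neg (by omega), T.zeros hcell']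

/-- The bijection between tableaux with entries `< n` and chains. -/
def tabChainEquiv (hn : 0 < n) : TabN n ≃ ChainT n where
  toFun := tabToChain hn
  invFun := chainToTab hn
  left_inv := chainToTab_tabToChain hn
  right_inv := tabToChain_chainToTab hn

end TabEquiv

section Weights

variable {μ : YoungDiagram} (T : SemistandardYoungTableau μ) (x : ℕ → ℝ) {n : ℕ}

lemma entry_ge_row : ∀ i j, (i, j) ∈ μ → i ≤ T i j := by
  intro i
  induction i with
  | zero => intro j _; omega
  | succ i ih =>
    intro j hcell
    have hcell' : (i, j) ∈ μ := μ.up_left_mem (by omega) le_rfl hcell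
    have h1 := ih j hcell'
    have h2 := T.col_strict (show i < i + 1 by omega) hcell
    omega

lemma rowLen_eq_zero_of_ge (hT : ∀ i j, T i j < n) {i : ℕ} (hi : n ≤ i) :
    μ.rowLen i = 0 := by
  by_contra h
  have hcell : (i, 0) ∈ μ := YoungDiagram.mem_iff_lt_rowLen.2 (by omega)
  have := entry_ge_row T i 0 hcell
  have := hT i 0
  omega

lemma cells_eq (hT : ∀ i j, T i j < n) :
    μ.cells = (Finset.range n).biUnion (fun i => {i} ×ˢ Finset.range (μ.rowLen i)) := by
  ext ⟨i, j⟩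
  simp only [Finset.mem_biUnion, Finset.mem_range, Finset.mem_product, Finset.mem_singleton,
    YoungDiagram.mem_cells]
  rw [YoungDiagram.mem_iff_lt_rowLen]
  constructor
  · intro h
    refine ⟨i, ?_, rfl, h⟩
    by_contra hi
    rw [rowLen_eq_zero_of_ge T hT (by omega)] at h
    omega
  · rintro ⟨i', _, rfl, h⟩
    exact h

lemma row_prod (i : ℕ) : ∀ m, ∏ j ∈ Finset.range (tabChain T m i), x (T i j)
    = ∏ k ∈ Finset.range m, x k ^ (tabChain T (k+1) i - tabChain T k i) := by
  intro m
  induction m with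
  | zero => simp [tabChain]
  | succ m ih =>
    rw [Finset.prod_range_succ, ← ih]
    have h1 : tabChain T m i ≤ tabChain T (m+1) i := by
      apply le_of_lt_imp
      intro j hj
      rw [tc_lt_iff] at hj ⊢
      exact ⟨hj.1, by omega⟩
    rw [Finset.range_eq_Ico,
      ← Finset.prod_Ico_consecutive _ (Nat.zero_le (tabChain T m i)) h1]
    congr 1
    · rw [Finset.range_eq_Ico]
    have hconst : ∀ j ∈ Finset.Ico (tabChain T m i) (tabChain T (m+1) i), x (T i j) = x m := by
      intro j hj
      simp only [Finset.mem_Ico] at hj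
      have h2 : j < μ.rowLen i ∧ T i j < m + 1 := tc_lt_iff T |>.1 hj.2
      have h3 : ¬(T i j < m) := by
        intro h
        have : j < tabChain T m i := (tc_lt_iff T).2 ⟨h2.1, h⟩
        omega
      have : T i j = m := by omega
      rw [this]
    rw [Finset.prod_congr rfl hconst, Finset.prod_const, Nat.card_Ico]

lemma tab_weight_eq (hT : ∀ i j, T i j < n) :
    ∏ c ∈ μ.cells, x (T c.1 c.2)
      = ∏ k ∈ Finset.range n, x k ^ (∑ i ∈ Finset.range n,
          (tabChain T (k+1) i - tabChain T k i)) := by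
  rw [cells_eq T hT, Finset.prod_biUnion]
  · have hrow : ∀ i ∈ Finset.range n, ∏ c ∈ {i} ×ˢ Finset.range (μ.rowLen i), x (T c.1 c.2)
        = ∏ k ∈ Finset.range n, x k ^ (tabChain T (k+1) i - tabChain T k i) := by
      intro i _
      rw [Finset.singleton_product, Finset.prod_map]
      have htop : tabChain T n i = μ.rowLen i := by
        unfold tabChain
        rw [Finset.filter_true_of_mem, Finset.card_range]
        intro j _
        exact hT i j
      calc ∏ j ∈ Finset.range (μ.rowLen i), x (T i j)
          = ∏ j ∈ Finset.range (tabChain T n i), x (T i j) := by rw [htop]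
        _ = _ := row_prod T x i n
    rw [Finset.prod_congr rfl hrow, Finset.prod_comm]
    apply Finset.prod_congr rfl
    intro k _
    rw [Finset.prod_pow_eq_pow_sum]
  · -- pairwise disjoint rows
    intro a _ b _ hab
    simp only [Finset.disjoint_left]
    intro c hc hc'
    simp only [Finset.mem_product, Finset.mem_singleton] at hc hc'
    exact hab (hc.1 ▸ hc'.1 ▸ rfl)

/-- Weight of a matrix: product over columns. -/
noncomputable def matWeight (x : ℕ → ℝ) (n : ℕ) (A : ℕ → ℕ → ℕ) : ℝ :=
  ∏ k ∈ Finset.range n, x k ^ (∑ i ∈ Finset.range n, A i k)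

lemma chain_weight_eq_matWeight {A : ℕ → ℕ → ℕ}
    (hsym : ∀ i j, A i j = A j i) (hsupp : ∀ i j, n ≤ i ∨ n ≤ j → A i j = 0) :
    ∏ k ∈ Finset.range n, x k ^ (∑ i ∈ Finset.range n,
        (grid A n (k+1) i - grid A n k i))
      = matWeight x n A := by
  unfold matWeight
  apply Finset.prod_congr rfl
  intro k hk
  simp only [Finset.mem_range] at hk
  congr 1
  have hsz := sz_grid_col hsupp hk n le_rfl
  have hle : ∀ i, grid A n k i ≤ grid A n (k+1) i := fun i => (grid_strip_right A n k).le i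
  have e1 : ∑ i ∈ Finset.range n, (grid A n (k+1) i - grid A n k i)
      + ∑ i ∈ Finset.range n, grid A n k i = ∑ i ∈ Finset.range n, grid A n (k+1) i := by
    rw [← Finset.sum_add_distrib]
    apply Finset.sum_congr rfl
    intro i _
    have := hle i
    omega
  unfold sz at hsz
  omega

end Weights

section IndexEquiv

variable (n : ℕ)

/-- Strictly upper pairs. -/
abbrev PairIdx := {p : Fin n × Fin n // p.1 < p.2}

/-- Index: diagonal entries plus strictly upper pairs. -/
abbrev Idx := Fin n ⊕ PairIdx n

/-- The factor associated to each index. -/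
noncomputable def idxVal (x : ℕ → ℝ) : Idx n → ℝ
  | .inl i => x i
  | .inr p => x (p.1.1 : ℕ) * x (p.1.2 : ℕ)

/-- Read off the independent entries of a matrix. -/
def matToFun (A : ℕ → ℕ → ℕ) : Idx n → ℕ
  | .inl i => A i i
  | .inr p => A (p.1.1 : ℕ) (p.1.2 : ℕ)

/-- Build a symmetric matrix from independent entries. -/
def funToMatAux (m : Idx n → ℕ) (i j : ℕ) : ℕ :=
  if hij : i < j then
    (if h : j < n then m (.inr ⟨(⟨i, by omega⟩, ⟨j, h⟩), by
      rw [Fin.mk_lt_mk]; exact hij⟩) else 0)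
  else if hji : j < i then
    (if h : i < n then m (.inr ⟨(⟨j, by omega⟩, ⟨i, h⟩), by
      rw [Fin.mk_lt_mk]; exact hji⟩) else 0)
  else (if h : i < n then m (.inl ⟨i, h⟩) else 0)

variable {n}

lemma funToMatAux_symm (m : Idx n → ℕ) (i j : ℕ) : funToMatAux n m i j = funToMatAux n m j i := by
  unfold funToMatAux
  rcases Nat.lt_trichotomy i j with h | h | h
  · rw [dif_pos h, dif_neg (show ¬ j < i by omega), dif_pos h]
  · subst h; rfl
  · rw [dif_neg (show ¬ i < j by omega), dif_pos h, dif_pos h]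

lemma funToMatAux_supp (m : Idx n → ℕ) (i j : ℕ) (h : n ≤ i ∨ n ≤ j) :
    funToMatAux n m i j = 0 := by
  unfold funToMatAux
  have hn : ¬ (i < n ∧ j < n) := by omega
  rcases Nat.lt_trichotomy i j with h' | h' | h'
  · rw [dif_pos h', dif_neg (show ¬ j < n by omega)]
  · subst h'
    simp only [dif_neg (show ¬ i < i by omega), dif_neg (show ¬ i < n by omega)]
  · rw [dif_neg (show ¬ i < j by omega), dif_pos h', dif_neg (show ¬ i < n by omega)]

/-- The equivalence between independent entries and symmetric supported matrices. -/
def funMatEquiv : (Idx n → ℕ) ≃ MatS n where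
  toFun m := ⟨funToMatAux n m, funToMatAux_symm m, funToMatAux_supp m⟩
  invFun A := matToFun n A.1
  left_inv m := by
    funext t
    rcases t with i | p
    · show funToMatAux n m (i : ℕ) (i : ℕ) = m (.inl i)
      unfold funToMatAux
      rw [dif_neg (by omega), dif_neg (by omega), dif_pos i.isLt]
    · obtain ⟨⟨a, b⟩, hab⟩ := p
      have hab' : (a : ℕ) < (b : ℕ) := hab
      show funToMatAux n m (a : ℕ) (b : ℕ) = _
      unfold funToMatAux
      rw [dif_pos hab', dif_pos b.isLt]
  right_inv A := by
    obtain ⟨A, hsym, hsupp⟩ := A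
    apply Subtype.ext
    funext i j
    show funToMatAux n (matToFun n A) i j = A i j
    unfold funToMatAux matToFun
    rcases Nat.lt_trichotomy i j with h | h | h
    · rw [dif_pos h]
      rcases Nat.lt_or_ge j n with h2 | h2
      · rw [dif_pos h2]
      · rw [dif_neg (by omega), hsupp i j (Or.inr h2)]
    · subst h
      rw [dif_neg (by omega), dif_neg (by omega)]
      rcases Nat.lt_or_ge i n with h2 | h2
      · rw [dif_pos h2]
      · rw [dif_neg (by omega), hsupp i i (Or.inr h2)]
    · rw [dif_neg (by omega), dif_pos h]
      rcases Nat.lt_or_ge i n with h2 | h2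
      · rw [dif_pos h2]
        exact hsym j i
      · rw [dif_neg (by omega), hsupp i j (Or.inl h2)]

variable (x : ℕ → ℝ)

lemma matWeight_eq_idx_prod {A : ℕ → ℕ → ℕ} (hsym : ∀ i j, A i j = A j i) :
    matWeight x n A = ∏ t : Idx n, idxVal n x t ^ (matToFun n A t) := by
  have sq_eq : (∏ p ∈ (Finset.range n ×ˢ Finset.range n), x p.2 ^ A p.1 p.2)
      = matWeight x n A := by
    rw [Finset.prod_product_right' (f := fun i k => x k ^ A i k)]
    unfold matWeight
    apply Finset.prod_congr rfl
    intro k _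
    rw [Finset.prod_pow_eq_pow_sum]
  rw [← sq_eq]
  set sq := Finset.range n ×ˢ Finset.range n with hsq
  have split1 := Finset.prod_filter_mul_prod_filter_not sq (fun p => p.1 = p.2)
    (fun p => x p.2 ^ A p.1 p.2)
  have split2 := Finset.prod_filter_mul_prod_filter_not (sq.filter (fun p => ¬ p.1 = p.2))
    (fun p => p.1 < p.2) (fun p => x p.2 ^ A p.1 p.2)
  have hup : (sq.filter (fun p => ¬ p.1 = p.2)).filter (fun p => p.1 < p.2)
      = sq.filter (fun p => p.1 < p.2) := by
    rw [Finset.filter_filter]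
    apply Finset.filter_congr
    intro p _
    constructor
    · tauto
    · intro h; exact ⟨by omega, h⟩
  have hlo : (sq.filter (fun p => ¬ p.1 = p.2)).filter (fun p => ¬ p.1 < p.2)
      = sq.filter (fun p => p.2 < p.1) := by
    rw [Finset.filter_filter]
    apply Finset.filter_congr
    intro p _
    constructor
    · intro h; omega
    · intro h; constructor <;> omega
  rw [hup, hlo] at split2
  -- diagonal part
  have hdiag : ∏ p ∈ sq.filter (fun p => p.1 = p.2), x p.2 ^ A p.1 p.2
      = ∏ i : Fin n, idxVal n x (.inl i) ^ (matToFun n A (.inl i)) := by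
    rw [show (∏ i : Fin n, idxVal n x (.inl i) ^ (matToFun n A (.inl i)))
        = ∏ k ∈ Finset.range n, x k ^ A k k from
      Fin.prod_univ_eq_prod_range (fun k => x k ^ A k k) n]
    apply Finset.prod_nbij' (fun p => p.1) (fun k => (k, k))
    · intro p hp
      simp only [hsq, Finset.mem_filter, Finset.mem_product, Finset.mem_range] at hp
      simp only [Finset.mem_range]
      exact hp.1.1
    · intro k hk
      simp only [Finset.mem_range] at hk
      simp only [hsq, Finset.mem_filter, Finset.mem_product, Finset.mem_range]
      exact ⟨⟨hk, hk⟩, by trivial⟩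
    · intro p hp
      simp only [hsq, Finset.mem_filter] at hp
      have := hp.2
      ext <;> simp [← this]
    · intro k _; rfl
    · intro p hp
      simp only [hsq, Finset.mem_filter] at hp
      rw [hp.2]
  -- lower part equals modified upper part
  have hlow : ∏ p ∈ sq.filter (fun p => p.2 < p.1), x p.2 ^ A p.1 p.2
      = ∏ p ∈ sq.filter (fun p => p.1 < p.2), x p.1 ^ A p.1 p.2 := by
    apply Finset.prod_nbij' (fun p => (p.2, p.1)) (fun p => (p.2, p.1))
    · intro p hp
      simp only [hsq, Finset.mem_filter, Finset.mem_product, Finset.mem_range] at hp ⊢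
      exact ⟨⟨hp.1.2, hp.1.1⟩, hp.2⟩
    · intro p hp
      simp only [hsq, Finset.mem_filter, Finset.mem_product, Finset.mem_range] at hp ⊢
      exact ⟨⟨hp.1.2, hp.1.1⟩, hp.2⟩
    · intro p _; rfl
    · intro p _; rfl
    · intro p _
      simp only
      rw [hsym p.1 p.2]
  -- upper part
  have hupper : (∏ p ∈ sq.filter (fun p => p.1 < p.2), x p.2 ^ A p.1 p.2)
      * ∏ p ∈ sq.filter (fun p => p.1 < p.2), x p.1 ^ A p.1 p.2
      = ∏ q : PairIdx n, idxVal n x (.inr q) ^ (matToFun n A (.inr q)) := by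
    rw [← Finset.prod_mul_distrib]
    symm
    apply Finset.prod_bij (fun (q : PairIdx n) _ => ((q.1.1 : ℕ), (q.1.2 : ℕ)))
    · intro q _
      simp only [hsq, Finset.mem_filter, Finset.mem_product, Finset.mem_range]
      exact ⟨⟨q.1.1.isLt, q.1.2.isLt⟩, q.2⟩
    · intro q1 _ q2 _ h
      simp only [Prod.mk.injEq] at h
      apply Subtype.ext
      apply Prod.ext <;> · apply Fin.ext; simp [h.1, h.2]
    · intro p hp
      simp only [hsq, Finset.mem_filter, Finset.mem_product, Finset.mem_range] at hp
      refine ⟨⟨(⟨p.1, hp.1.1⟩, ⟨p.2, hp.1.2⟩), by rw [Fin.mk_lt_mk]; exact hp.2⟩,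
        Finset.mem_univ _, rfl⟩
    · intro q _
      show idxVal n x (.inr q) ^ (matToFun n A (.inr q)) = _
      unfold idxVal matToFun
      rw [mul_pow]
      ring
  calc ∏ p ∈ sq, x p.2 ^ A p.1 p.2
      = (∏ p ∈ sq.filter (fun p => p.1 = p.2), x p.2 ^ A p.1 p.2)
        * ((∏ p ∈ sq.filter (fun p => p.1 < p.2), x p.2 ^ A p.1 p.2)
          * ∏ p ∈ sq.filter (fun p => p.2 < p.1), x p.2 ^ A p.1 p.2) := by
        rw [split2, split1]
    _ = (∏ i : Fin n, idxVal n x (.inl i) ^ (matToFun n A (.inl i)))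
        * ∏ q : PairIdx n, idxVal n x (.inr q) ^ (matToFun n A (.inr q)) := by
        rw [hdiag, hlow, hupper]
    _ = ∏ t : Idx n, idxVal n x t ^ (matToFun n A t) := by
        rw [Fintype.prod_sum_type]

end IndexEquiv

section Geom

lemma geom_fin : ∀ (N : ℕ) (r : Fin N → ℝ), (∀ a, |r a| < 1) →
    Summable (fun m : Fin N → ℕ => ∏ a, r a ^ m a) ∧
      (∑' m : Fin N → ℕ, ∏ a, r a ^ m a) = ∏ a, (1 - r a)⁻¹ := by
  intro N
  induction N with
  | zero =>
    intro r _
    haveI : Unique (Fin 0 → ℕ) := ⟨⟨fun x => x.elim0⟩, fun f => funext fun x => x.elim0⟩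
    constructor
    · exact .of_finite
    · rw [tsum_eq_single (default : Fin 0 → ℕ)
        (fun b hb => absurd (Subsingleton.elim b default) hb)]
      simp
  | succ N ih =>
    intro r hr
    set E := ((Fin.consEquiv fun _ => ℕ).symm : (Fin (N+1) → ℕ) ≃ ℕ × (Fin N → ℕ)) with hE
    set g1 : ℕ → ℝ := fun k => r 0 ^ k with hg1
    set g2 : (Fin N → ℕ) → ℝ := fun m => ∏ i : Fin N, r i.succ ^ m i with hg2
    have hg1norm : Summable (fun k => ‖g1 k‖) := by
      have : (fun k => ‖g1 k‖) = fun k => |r 0| ^ k := by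
        funext k; simp [hg1, abs_pow]
      rw [this]
      exact summable_geometric_of_lt_one (abs_nonneg _) (hr 0)
    have ih1 := ih (fun i => r i.succ) (fun i => hr i.succ)
    have ihabs := ih (fun i => |r i.succ|) (fun i => by rw [abs_abs]; exact hr i.succ)
    have hg2norm : Summable (fun m => ‖g2 m‖) := by
      have : (fun m : Fin N → ℕ => ‖g2 m‖) = fun m => ∏ i : Fin N, |r i.succ| ^ m i := by
        funext m
        simp only [hg2, Real.norm_eq_abs, Finset.abs_prod, abs_pow]
      rw [this]
      exact ihabs.1
    have hgs : Summable (fun p : ℕ × (Fin N → ℕ) => g1 p.1 * g2 p.2) :=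
      summable_mul_of_summable_norm hg1norm hg2norm
    have hfE : ∀ m : Fin (N+1) → ℕ, (∏ a, r a ^ m a) = g1 (E m).1 * g2 (E m).2 := by
      intro m
      rw [Fin.prod_univ_succ]
      rfl
    constructor
    · apply (Equiv.summable_iff E.symm).1
      have : ((fun m : Fin (N+1) → ℕ => ∏ a, r a ^ m a) ∘ E.symm)
          = fun p : ℕ × (Fin N → ℕ) => g1 p.1 * g2 p.2 := by
        funext p
        simp only [Function.comp_apply, hfE, Equiv.apply_symm_apply]
      rw [this]
      exact hgs
    · have h1 : (∑' m : Fin (N+1) → ℕ, ∏ a, r a ^ m a)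
          = ∑' p : ℕ × (Fin N → ℕ), g1 p.1 * g2 p.2 := by
        rw [← Equiv.tsum_eq E.symm]
        apply tsum_congr
        intro p
        rw [hfE, Equiv.apply_symm_apply]
      rw [h1, ← tsum_mul_tsum_of_summable_norm hg1norm hg2norm,
        tsum_geometric_of_abs_lt_one (hr 0), ih1.2, Fin.prod_univ_succ]

lemma geom_pi (α : Type) [Fintype α] (r : α → ℝ) (hr : ∀ a, |r a| < 1) :
    Summable (fun m : α → ℕ => ∏ a, r a ^ m a) ∧
      (∑' m : α → ℕ, ∏ a, r a ^ m a) = ∏ a, (1 - r a)⁻¹ := by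
  set e := Fintype.equivFin α with he
  set E : (Fin (Fintype.card α) → ℕ) ≃ (α → ℕ) := Equiv.arrowCongr e.symm (Equiv.refl ℕ) with hE
  have hfin := geom_fin (Fintype.card α) (fun i => r (e.symm i)) (fun i => hr _)
  have hcomp : ((fun m : α → ℕ => ∏ a, r a ^ m a) ∘ E)
      = fun m' : Fin (Fintype.card α) → ℕ => ∏ i, r (e.symm i) ^ m' i := by
    funext m'
    simp only [Function.comp_apply]
    rw [← Equiv.prod_comp e.symm (fun a => r a ^ (E m') a)]
    apply Finset.prod_congr rfl
    intro i _
    have : (E m') (e.symm i) = m' i := by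
      simp [hE, Equiv.arrowCongr]
    rw [this]
  constructor
  · apply (Equiv.summable_iff E).1
    rw [hcomp]
    exact hfin.1
  · rw [← Equiv.tsum_eq E, show ∀ (f g : (Fin (Fintype.card α) → ℕ) → ℝ), f = g → ∑' m, f m = ∑' m, g m
        from fun f g h => by rw [h]]
    · rw [hfin.2, ← Equiv.prod_comp e.symm (fun a => (1 - r a)⁻¹)]
    · exact hcomp

end Geom

section Final

variable {x : ℕ → ℝ} {n : ℕ}

/-- Weight of a tableau. -/
noncomputable def tw (x : ℕ → ℝ) (y : Σ μ : YoungDiagram, SemistandardYoungTableau μ) : ℝ :=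
  ∏ c ∈ y.1.cells, x (y.2 c.1 c.2)

/-- The grand bijection: independent matrix entries to tableaux. -/
def grandEquiv (hn : 0 < n) : (Idx n → ℕ) ≃ TabN n :=
  funMatEquiv.trans (matChainEquiv.trans (tabChainEquiv hn).symm)

lemma idxVal_lt_one (hx : ∀ i, |x i| < 1) : ∀ t : Idx n, |idxVal n x t| < 1 := by
  intro t
  rcases t with i | p
  · exact hx i
  · show |x (p.1.1 : ℕ) * x (p.1.2 : ℕ)| < 1
    rw [abs_mul]
    calc |x (p.1.1 : ℕ)| * |x (p.1.2 : ℕ)|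
        ≤ |x (p.1.1 : ℕ)| * 1 :=
          mul_le_mul_of_nonneg_left (le_of_lt (hx _)) (abs_nonneg _)
      _ < 1 := by rw [mul_one]; exact hx _

lemma weight_grandEquiv (hn : 0 < n) (m : Idx n → ℕ) :
    tw x (grandEquiv hn m).1 = ∏ t : Idx n, idxVal n x t ^ m t := by
  set A : MatS n := funMatEquiv m with hA
  set c : ChainT n := matChainEquiv A with hc
  set y : TabN n := (tabChainEquiv hn).symm c with hy
  have hy' : grandEquiv hn m = y := rfl
  rw [hy']
  have h2 : tabChain y.1.2 = fun k => grid A.1 n k :=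
    congrArg Subtype.val ((tabChainEquiv hn).apply_symm_apply c)
  calc tw x y.1
      = ∏ k ∈ Finset.range n, x k ^ (∑ i ∈ Finset.range n,
          (tabChain y.1.2 (k+1) i - tabChain y.1.2 k i)) := tab_weight_eq y.1.2 x y.2
    _ = ∏ k ∈ Finset.range n, x k ^ (∑ i ∈ Finset.range n,
          (grid A.1 n (k+1) i - grid A.1 n k i)) := by simp only [h2]
    _ = matWeight x n A.1 := chain_weight_eq_matWeight x A.2.1 A.2.2
    _ = ∏ t : Idx n, idxVal n x t ^ (matToFun n A.1 t) := matWeight_eq_idx_prod x A.2.1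
    _ = ∏ t : Idx n, idxVal n x t ^ m t := by
        rw [show matToFun n A.1 = m from funMatEquiv.symm_apply_apply m]

lemma tw_eq_zero (hn : 0 < n) (hsupp : ∀ i, n ≤ i → x i = 0)
    {y : Σ μ : YoungDiagram, SemistandardYoungTableau μ}
    (hy : ¬ ∀ i j, y.2 i j < n) : tw x y = 0 := by
  push_neg at hy
  obtain ⟨i, j, hij⟩ := hy
  have hcell : (i, j) ∈ y.1 := by
    by_contra h
    rw [y.2.zeros h] at hij
    omega
  apply Finset.prod_eq_zero ((YoungDiagram.mem_cells (i, j)).2 hcell)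
  show x (y.2 (i, j).1 (i, j).2) = 0
  exact hsupp _ hij

lemma rhs_eq (hn : 0 < n) (hsupp : ∀ i, n ≤ i → x i = 0) :
    (∏ t : Idx n, (1 - idxVal n x t)⁻¹)
      = (∏' i : ℕ, (1 - x i)⁻¹) *
        ∏' p : {p : ℕ × ℕ // p.1 < p.2}, (1 - x (p : ℕ × ℕ).1 * x (p : ℕ × ℕ).2)⁻¹ := by
  rw [Fintype.prod_sum_type]
  congr 1
  · rw [tprod_eq_prod (s := Finset.range n) (f := fun i => (1 - x i)⁻¹) (by
      intro b hb
      show (1 - x b)⁻¹ = 1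
      rw [hsupp b (by simpa using hb)]
      norm_num)]
    exact Fin.prod_univ_eq_prod_range (fun k => (1 - x k)⁻¹) n
  · rw [tprod_eq_prod
      (s := (Finset.range n ×ˢ Finset.range n).subtype (fun p => p.1 < p.2))
      (f := fun p : {p : ℕ × ℕ // p.1 < p.2} => (1 - x (p : ℕ × ℕ).1 * x (p : ℕ × ℕ).2)⁻¹) (by
        intro q hq
        show (1 - x (q : ℕ × ℕ).1 * x (q : ℕ × ℕ).2)⁻¹ = 1
        simp only [Finset.mem_subtype, Finset.mem_product, Finset.mem_range] at hq
        rcases Nat.lt_or_ge (q : ℕ × ℕ).1 n with h1 | h1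
        · have h2 : n ≤ (q : ℕ × ℕ).2 := by
            by_contra h2
            exact hq ⟨h1, by omega⟩
          rw [hsupp _ h2]
          norm_num
        · rw [hsupp _ h1]
          norm_num)]
    apply Finset.prod_bij (fun (q : PairIdx n) _ =>
      (⟨((q.1.1 : ℕ), (q.1.2 : ℕ)), q.2⟩ : {p : ℕ × ℕ // p.1 < p.2}))
    · intro q _
      simp only [Finset.mem_subtype, Finset.mem_product, Finset.mem_range]
      exact ⟨q.1.1.isLt, q.1.2.isLt⟩
    · intro q1 _ q2 _ h
      have h' := congrArg Subtype.val h
      simp only [Prod.mk.injEq] at h'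
      apply Subtype.ext
      apply Prod.ext <;> · apply Fin.ext; simp [h'.1, h'.2]
    · intro b hb
      simp only [Finset.mem_subtype, Finset.mem_product, Finset.mem_range] at hb
      refine ⟨⟨(⟨(b : ℕ × ℕ).1, hb.1⟩, ⟨(b : ℕ × ℕ).2, hb.2⟩), by
        rw [Fin.mk_lt_mk]; exact b.2⟩, Finset.mem_univ _, ?_⟩
      apply Subtype.ext
      rfl
    · intro q _
      rfl

end Final

end Littlewood

/-- The Schur function `s_μ(x)`, defined combinatorially as the sum over all semistandard
Young tableaux `T` of shape `μ` (with entries in `ℕ`) of the monomial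
`∏_{c ∈ μ} x_{T(c)}`, evaluated at a sequence of real numbers `x`. -/
noncomputable def schurVal (μ : YoungDiagram) (x : ℕ → ℝ) : ℝ :=
  ∑' T : SemistandardYoungTableau μ, ∏ c ∈ μ.cells, x (T c.1 c.2)

/-- The identity `∑_λ s_λ(x) = ∏_i (1 - x_i)⁻¹ · ∏_{i<j} (1 - x_i x_j)⁻¹`, where the sum
is over all partitions `λ` (including the empty one), stated for real variables `x`
with finitely many nonzero entries, all of absolute value less than `1` (such values
determine the underlying identity of formal power series in infinitely many variables). -/
theorem sum_schur_eq (x : ℕ → ℝ) (hfin : (Function.support x).Finite)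
    (hx : ∀ i, |x i| < 1) :
    ∑' μ : YoungDiagram, schurVal μ x =
      (∏' i : ℕ, (1 - x i)⁻¹) *
        ∏' p : {p : ℕ × ℕ // p.1 < p.2}, (1 - x (p : ℕ × ℕ).1 * x (p : ℕ × ℕ).2)⁻¹ := by
  classical
  open Littlewood in
  set n : ℕ := hfin.toFinset.sup id + 1 with hn_def
  have hn : 0 < n := Nat.succ_pos _
  have hsupp : ∀ i, n ≤ i → x i = 0 := by
    intro i hi
    by_contra h
    have h1 : i ∈ hfin.toFinset := hfin.mem_toFinset.2 h
    have h2 := Finset.le_sup (f := id) h1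
    simp only [id] at h2
    omega
  have hr := idxVal_lt_one (n := n) hx
  obtain ⟨hsumm, htsum⟩ := geom_pi (Idx n) (idxVal n x) hr
  set E := grandEquiv (n := n) hn with hE
  have hw_comp : (fun (y : TabN n) => tw x y.1) ∘ E
      = fun m : Idx n → ℕ => ∏ t, idxVal n x t ^ m t := by
    funext m
    exact weight_grandEquiv hn m
  have hsub : Summable (fun (y : TabN n) => tw x y.1) := by
    rw [← hw_comp] at hsumm
    exact (Equiv.summable_iff E).1 hsumm
  set Sn : Set (Σ μ : YoungDiagram, SemistandardYoungTableau μ) := {y | ∀ i j, y.2 i j < n}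
    with hSn
  have hss : Function.support (tw x) ⊆ Sn := by
    intro y hy
    by_contra h
    exact hy (tw_eq_zero hn hsupp h)
  have hsubtype : Summable ((tw x) ∘ (Subtype.val : Sn → _)) := hsub
  have hw : Summable (tw x) := by
    rw [← Set.indicator_eq_self.2 hss]
    exact summable_subtype_iff_indicator.1 hsubtype
  calc ∑' μ : YoungDiagram, schurVal μ x
      = ∑' y : (Σ μ : YoungDiagram, SemistandardYoungTableau μ), tw x y := (hw.tsum_sigma).symm
    _ = ∑' y : Sn, tw x y := (tsum_subtype_eq_of_support_subset hss).symm
    _ = ∑' y : TabN n, tw x y.1 := rfl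
    _ = ∑' m : Idx n → ℕ, ∏ t, idxVal n x t ^ m t := by
        rw [← Equiv.tsum_eq E (fun y : TabN n => tw x y.1)]
        exact tsum_congr fun m => congrFun hw_comp m
    _ = ∏ t : Idx n, (1 - idxVal n x t)⁻¹ := htsum
    _ = _ := rhs_eq hn hsupp
end

section
/- For any q with |q| > 1, the following formal power series identity in u holds: (prod_{i >= 1} (1 + u/q^i)) / (prod_{i >= 1} (1 - u^2/q^i)) = sum_{n >= 0} u^n q^{binom(n,2)} sum_{r=0}^{floor(n/2)} 1/(q^{r(2n-3r)} gamma_r gamma_{n-2r}). -/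
open Filter Finset
set_option linter.unusedSectionVars false

noncomputable def glGamma (q : ℝ) (j : ℕ) : ℝ :=
  q ^ j.choose 2 * ∏ i ∈ Finset.range j, (q ^ (i + 1) - 1)

namespace GlAux

noncomputable def PP (q : ℝ) (n : ℕ) : ℝ := ∏ i ∈ Finset.range n, (q ^ (i + 1) - 1)

noncomputable def aa (q : ℝ) (n : ℕ) : ℝ := (PP q n)⁻¹

noncomputable def bb (q : ℝ) (r : ℕ) : ℝ := q ^ r.choose 2 / PP q r

noncomputable def bb' (q : ℝ) (k : ℕ) : ℝ := if 2 ∣ k then bb q (k / 2) else 0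

variable {q : ℝ} (hq : 1 < |q|)

include hq

lemma q_ne_zero : q ≠ 0 := by
  intro h; rw [h] at hq; simp at hq; linarith

lemma abs_pow_gt (k : ℕ) : 1 < |q ^ (k + 1)| := by
  rw [abs_pow]
  exact one_lt_pow₀ hq (by omega)

lemma factor_ne_zero (k : ℕ) : q ^ (k + 1) - 1 ≠ 0 := by
  intro h
  have h1 : q ^ (k+1) = 1 := by linarith [sub_eq_zero.mp h]
  have := abs_pow_gt hq k
  rw [h1] at this; simp at this

lemma PP_ne_zero (n : ℕ) : PP q n ≠ 0 := by
  unfold PP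
  exact Finset.prod_ne_zero_iff.mpr fun i _ => factor_ne_zero hq i

lemma PP_succ (n : ℕ) : PP q (n + 1) = PP q n * (q ^ (n + 1) - 1) := by
  unfold PP; exact Finset.prod_range_succ _ _

lemma PP_zero : PP q 0 = 1 := by unfold PP; simp

lemma aa_zero : aa q 0 = 1 := by unfold aa; rw [PP_zero hq]; norm_num

lemma bb_zero : bb q 0 = 1 := by unfold bb; rw [PP_zero hq]; norm_num

lemma aa_ne_zero (n : ℕ) : aa q n ≠ 0 := by
  unfold aa; exact inv_ne_zero (PP_ne_zero hq n)

lemma aa_rec (n : ℕ) : aa q (n + 1) * (q ^ (n + 1) - 1) = aa q n := by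
  unfold aa
  rw [PP_succ hq]
  field_simp [PP_ne_zero hq n, factor_ne_zero hq n]

lemma bb_rec (r : ℕ) : bb q (r + 1) * (q ^ (r + 1) - 1) = bb q r * q ^ r := by
  unfold bb
  rw [PP_succ hq, Nat.choose_succ_succ r 1, Nat.choose_one_right, pow_add]
  field_simp [PP_ne_zero hq r, factor_ne_zero hq r]

end GlAux

namespace GlAux
variable {q : ℝ} (hq : 1 < |q|)
include hq

lemma summable_aa_norm (v : ℝ) : Summable fun n => ‖aa q n * v ^ n‖ := by
  apply summable_of_ratio_norm_eventually_le (r := 1/2) (by norm_num)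
  have h2 : Tendsto (fun n : ℕ => |q| ^ (n + 1)) atTop atTop :=
    (tendsto_pow_atTop_atTop_of_one_lt hq).comp (tendsto_add_atTop_nat 1)
  filter_upwards [h2.eventually_ge_atTop (2 * |v| + 1)] with n hn
  have hfac : 2 * |v| ≤ |q ^ (n + 1) - 1| := by
    have : |q| ^ (n+1) - 1 ≤ |q ^ (n+1) - 1| := by
      rw [← abs_pow]
      have := abs_sub_abs_le_abs_sub (q ^ (n+1)) 1
      simpa using this
    linarith
  have key : aa q (n + 1) = aa q n / (q ^ (n + 1) - 1) := by
    rw [eq_div_iff (factor_ne_zero hq n), aa_rec hq]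
  rw [key]
  have hne := factor_ne_zero hq n
  rw [norm_norm, norm_norm]
  have : ‖aa q n / (q ^ (n+1) - 1) * v ^ (n+1)‖ = ‖aa q n * v ^ n‖ * (|v| / |q ^ (n+1) - 1|) := by
    rw [pow_succ]
    simp [norm_mul, norm_div, abs_mul, abs_div]
    ring
  rw [this]
  rcases eq_or_ne (‖aa q n * v ^ n‖) 0 with h0 | h0
  · rw [h0]; simp
  · have hpos : 0 < ‖aa q n * v ^ n‖ := lt_of_le_of_ne (norm_nonneg _) (Ne.symm h0)
    rw [mul_comm (1/2 : ℝ) _]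
    apply mul_le_mul_of_nonneg_left _ (norm_nonneg _)
    rw [div_le_iff₀ (by positivity)]
    have : 0 < |q ^ (n+1) - 1| := abs_pos.mpr hne
    linarith

lemma summable_aa (v : ℝ) : Summable fun n => aa q n * v ^ n :=
  (summable_aa_norm hq v).of_norm

lemma summable_bb_norm (v : ℝ) (hv : |v| ≤ 1) : Summable fun r => ‖bb q r * v ^ r‖ := by
  set r0 : ℝ := (|q|⁻¹ + 1) / 2 with hr0def
  have hq0 : (0:ℝ) < |q| := by linarith
  have hr0lt : r0 < 1 := by
    rw [hr0def]
    have : |q|⁻¹ < 1 := by rw [inv_lt_one_iff₀]; right; exact hq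
    linarith
  have hr0pos : 0 < r0 := by
    rw [hr0def]; positivity
  apply summable_of_ratio_norm_eventually_le (r := r0) hr0lt
  have hrq : 1 < r0 * |q| := by
    rw [hr0def]
    have : (|q|⁻¹ + 1) / 2 * |q| = (1 + |q|) / 2 := by field_simp
    rw [this]; linarith
  have h2 : Tendsto (fun n : ℕ => |q| ^ n) atTop atTop := tendsto_pow_atTop_atTop_of_one_lt hq
  filter_upwards [h2.eventually_ge_atTop ((r0 + 1) / (r0 * |q| - 1))] with n hn
  -- |bb (n+1) v^(n+1)| = |bb n v^n| * |v| * |q|^n / |q^(n+1) - 1|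
  have key : bb q (n + 1) = bb q n * q ^ n / (q ^ (n + 1) - 1) := by
    rw [eq_div_iff (factor_ne_zero hq n), bb_rec hq]
  rw [key, norm_norm, norm_norm]
  have heq : ‖bb q n * q ^ n / (q ^ (n+1) - 1) * v ^ (n+1)‖
      = ‖bb q n * v ^ n‖ * (|v| * |q| ^ n / |q ^ (n+1) - 1|) := by
    rw [pow_succ]
    simp [norm_mul, norm_div, abs_mul, abs_div, abs_pow]
    ring
  rw [heq]
  rcases eq_or_ne (‖bb q n * v ^ n‖) 0 with h0 | h0
  · rw [h0]; simp
  · rw [mul_comm r0 _]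
    apply mul_le_mul_of_nonneg_left _ (norm_nonneg _)
    have hne := factor_ne_zero hq n
    have hpos : 0 < |q ^ (n+1) - 1| := abs_pos.mpr hne
    rw [div_le_iff₀ hpos]
    have hlow : |q| ^ (n+1) - 1 ≤ |q ^ (n+1) - 1| := by
      rw [← abs_pow]
      have := abs_sub_abs_le_abs_sub (q ^ (n+1)) 1
      simpa using this
    have h1 : |v| * |q| ^ n ≤ |q| ^ n := by
      nlinarith [pow_pos hq0 n, abs_nonneg v]
    have hd : (0:ℝ) < r0 * |q| - 1 := by linarith
    rw [div_le_iff₀ hd] at hn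
    have hq1 : |q| ^ (n+1) = |q| ^ n * |q| := pow_succ _ _
    nlinarith [pow_pos hq0 n]
end GlAux
namespace GlAux
variable {q : ℝ} (hq : 1 < |q|)
include hq

noncomputable def AA (q v : ℝ) : ℝ := ∑' n, aa q n * v ^ n
noncomputable def GG (q v : ℝ) : ℝ := ∑' r, bb q r * v ^ r

lemma summable_bb (v : ℝ) (hv : |v| ≤ 1) : Summable fun r => bb q r * v ^ r :=
  (summable_bb_norm hq v hv).of_norm

/-- functional equation for AA -/
lemma AA_fe (v : ℝ) : AA q v = (1 + v / q) * AA q (v / q) := by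
  have hq0 := q_ne_zero hq
  set h₂ : ℕ → ℝ := fun m => match m with
    | 0 => 0
    | Nat.succ n => v / q * (aa q n * (v / q) ^ n) with hh₂
  have hs1 : Summable fun n => aa q n * (v / q) ^ n := summable_aa hq _
  have hs2 : Summable h₂ := by
    rw [← summable_nat_add_iff 1]
    exact (hs1.mul_left (v / q)).congr (fun n => rfl)
  have hterm : ∀ n, aa q n * v ^ n = aa q n * (v / q) ^ n + h₂ n := by
    intro n
    match n with
    | 0 => simp [aa_zero hq, hh₂]
    | Nat.succ n =>
      show aa q (n+1) * v ^ (n+1) = aa q (n+1) * (v / q) ^ (n+1) + v / q * (aa q n * (v / q) ^ n)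
      rw [← aa_rec hq n]
      rw [div_pow, div_pow]
      field_simp
      ring
  have : AA q v = ∑' n, (aa q n * (v / q) ^ n + h₂ n) := by
    unfold AA; exact tsum_congr hterm
  rw [this, Summable.tsum_add hs1 hs2]
  have : ∑' n, h₂ n = v / q * AA q (v / q) := by
    rw [Summable.tsum_eq_zero_add hs2]
    show (0:ℝ) + ∑' n, v / q * (aa q n * (v / q) ^ n) = _
    rw [zero_add, tsum_mul_left]
    rfl
  rw [this]
  unfold AA
  ring

/-- functional equation for GG -/
lemma GG_fe (v : ℝ) (hv : |v| ≤ 1) : (1 - v / q) * GG q v = GG q (v / q) := by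
  have hq0 := q_ne_zero hq
  have hvq : |v / q| ≤ 1 := by
    rw [abs_div]
    calc |v| / |q| ≤ 1 / 1 := by
          apply div_le_div₀ (by norm_num) hv (by norm_num) (le_of_lt hq)
    _ = 1 := by norm_num
  set h₂ : ℕ → ℝ := fun m => match m with
    | 0 => 0
    | Nat.succ r => v / q * (bb q r * v ^ r) with hh₂
  have hs1 : Summable fun r => bb q r * (v / q) ^ r := summable_bb hq _ hvq
  have hsv : Summable fun r => bb q r * v ^ r := summable_bb hq _ hv
  have hs2 : Summable h₂ := by
    rw [← summable_nat_add_iff 1]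
    exact (hsv.mul_left (v / q)).congr (fun n => rfl)
  have hterm : ∀ r, bb q r * v ^ r = bb q r * (v / q) ^ r + h₂ r := by
    intro r
    match r with
    | 0 => simp [bb_zero hq, hh₂]
    | Nat.succ r =>
      show bb q (r+1) * v ^ (r+1) = bb q (r+1) * (v / q) ^ (r+1) + v / q * (bb q r * v ^ r)
      have hrec : bb q r = bb q (r+1) * (q ^ (r+1) - 1) / q ^ r := by
        rw [eq_div_iff (pow_ne_zero _ hq0), ← bb_rec hq r]
      rw [hrec]
      rw [div_pow]
      field_simp
      ring
  have hsum2 : ∑' r, h₂ r = v / q * GG q v := by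
    rw [Summable.tsum_eq_zero_add hs2]
    show (0:ℝ) + ∑' r, v / q * (bb q r * v ^ r) = _
    rw [zero_add, tsum_mul_left]
    rfl
  have h1 : GG q v = GG q (v / q) + v / q * GG q v := by
    conv_lhs => rw [GG, tsum_congr hterm]
    rw [Summable.tsum_add hs1 hs2, hsum2]
    rfl
  linear_combination h1

end GlAux
namespace GlAux
variable {q : ℝ} (hq : 1 < |q|)
include hq

lemma abs_AA_sub_one_le (v : ℝ) (hv : |v| ≤ 1) :
    |AA q v - 1| ≤ (∑' n, |aa q (n + 1)|) * |v| := by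
  have hs : Summable fun n => aa q n * v ^ n := summable_aa hq v
  have hsa : Summable fun n : ℕ => |aa q (n + 1)| := by
    have := summable_aa_norm hq 1
    simp only [one_pow, mul_one] at this
    exact ((summable_nat_add_iff 1).mpr this).congr fun n => rfl
  have h0 : AA q v - 1 = ∑' n, aa q (n + 1) * v ^ (n + 1) := by
    unfold AA
    rw [Summable.tsum_eq_zero_add hs]
    simp [aa_zero hq]
  rw [h0]
  calc |∑' n, aa q (n + 1) * v ^ (n + 1)| ≤ ∑' n, |aa q (n + 1) * v ^ (n + 1)| := by
        simp only [← Real.norm_eq_abs]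
        apply norm_tsum_le_tsum_norm
        have := (summable_nat_add_iff (f := fun n => |aa q n * v ^ n|) 1).mpr
          ((summable_aa_norm hq v).congr fun n => by simp [abs_mul, abs_pow])
        exact this.congr fun n => rfl
    _ ≤ ∑' n, |aa q (n + 1)| * |v| := by
        apply Summable.tsum_le_tsum _ _ (hsa.mul_right _)
        · intro n
          rw [abs_mul, abs_pow]
          apply mul_le_mul_of_nonneg_left _ (abs_nonneg _)
          calc |v| ^ (n + 1) = |v| * |v| ^ n := by ring
            _ ≤ |v| * 1 := by
                apply mul_le_mul_of_nonneg_left _ (abs_nonneg _)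
                exact pow_le_one₀ (abs_nonneg _) hv
            _ = |v| := by ring
        · have := (summable_nat_add_iff (f := fun n => |aa q n * v ^ n|) 1).mpr
            ((summable_aa_norm hq v).congr fun n => by simp [abs_mul, abs_pow])
          exact this.congr fun n => rfl
    _ = (∑' n, |aa q (n + 1)|) * |v| := by rw [tsum_mul_right]

lemma abs_GG_sub_one_le (v : ℝ) (hv : |v| ≤ 1) :
    |GG q v - 1| ≤ (∑' r, |bb q (r + 1)|) * |v| := by
  have hs : Summable fun r => bb q r * v ^ r := summable_bb hq v hv
  have hsa : Summable fun r : ℕ => |bb q (r + 1)| := by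
    have := summable_bb_norm hq 1 (by norm_num)
    simp only [one_pow, mul_one] at this
    exact ((summable_nat_add_iff 1).mpr this).congr fun n => rfl
  have h0 : GG q v - 1 = ∑' r, bb q (r + 1) * v ^ (r + 1) := by
    unfold GG
    rw [Summable.tsum_eq_zero_add hs]
    simp [bb_zero hq]
  rw [h0]
  calc |∑' r, bb q (r + 1) * v ^ (r + 1)| ≤ ∑' r, |bb q (r + 1) * v ^ (r + 1)| := by
        simp only [← Real.norm_eq_abs]
        apply norm_tsum_le_tsum_norm
        have := (summable_nat_add_iff (f := fun r => |bb q r * v ^ r|) 1).mpr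
          ((summable_bb_norm hq v hv).congr fun n => by simp [abs_mul, abs_pow])
        exact this.congr fun n => rfl
    _ ≤ ∑' r, |bb q (r + 1)| * |v| := by
        apply Summable.tsum_le_tsum _ _ (hsa.mul_right _)
        · intro r
          rw [abs_mul, abs_pow]
          apply mul_le_mul_of_nonneg_left _ (abs_nonneg _)
          calc |v| ^ (r + 1) = |v| * |v| ^ r := by ring
            _ ≤ |v| * 1 := by
                apply mul_le_mul_of_nonneg_left _ (abs_nonneg _)
                exact pow_le_one₀ (abs_nonneg _) hv
            _ = |v| := by ring
        · have hsv : Summable fun r => |bb q r * v ^ r| :=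
            (summable_bb_norm hq v hv).congr fun n => by simp [abs_mul, abs_pow]
          exact ((summable_nat_add_iff (f := fun r => |bb q r * v ^ r|) 1).mpr hsv).congr
            fun n => rfl
    _ = (∑' r, |bb q (r + 1)|) * |v| := by rw [tsum_mul_right]

lemma tendsto_div_pow_zero (w : ℝ) : Tendsto (fun N : ℕ => w / q ^ N) atTop (nhds 0) := by
  have hq0 := q_ne_zero hq
  have h : Tendsto (fun N : ℕ => (q⁻¹) ^ N) atTop (nhds 0) := by
    apply tendsto_pow_atTop_nhds_zero_of_norm_lt_one
    rw [norm_inv, Real.norm_eq_abs, inv_lt_one_iff₀]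
    right; exact hq
  have := h.const_mul w
  simpa [div_eq_mul_inv, inv_pow] using this

lemma tendsto_AA_one (w : ℝ) (hw : |w| ≤ 1) :
    Tendsto (fun N : ℕ => AA q (w / q ^ N)) atTop (nhds 1) := by
  have habs : ∀ N : ℕ, |w / q ^ N| ≤ 1 := by
    intro N
    rw [abs_div, abs_pow]
    calc |w| / |q| ^ N ≤ 1 / 1 := by
          apply div_le_div₀ (by norm_num) hw (by norm_num)
          exact one_le_pow₀ (le_of_lt hq)
      _ = 1 := by norm_num
  have hb : Tendsto (fun N : ℕ => (∑' n, |aa q (n + 1)|) * |w / q ^ N|) atTop (nhds 0) := by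
    have := ((tendsto_div_pow_zero hq w).abs).const_mul (∑' n, |aa q (n + 1)|)
    simpa using this
  have hz : Tendsto (fun N : ℕ => |AA q (w / q ^ N) - 1|) atTop (nhds 0) :=
    squeeze_zero (fun N => abs_nonneg _)
      (fun N => abs_AA_sub_one_le hq _ (habs N)) hb
  have hz2 : Tendsto (fun N : ℕ => AA q (w / q ^ N) - 1) atTop (nhds 0) := by
    rwa [tendsto_zero_iff_abs_tendsto_zero]
  have := hz2.add_const 1
  simpa using this

lemma tendsto_GG_one (w : ℝ) (hw : |w| ≤ 1) :
    Tendsto (fun N : ℕ => GG q (w / q ^ N)) atTop (nhds 1) := by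
  have habs : ∀ N : ℕ, |w / q ^ N| ≤ 1 := by
    intro N
    rw [abs_div, abs_pow]
    calc |w| / |q| ^ N ≤ 1 / 1 := by
          apply div_le_div₀ (by norm_num) hw (by norm_num)
          exact one_le_pow₀ (le_of_lt hq)
      _ = 1 := by norm_num
  have hb : Tendsto (fun N : ℕ => (∑' r, |bb q (r + 1)|) * |w / q ^ N|) atTop (nhds 0) := by
    have := ((tendsto_div_pow_zero hq w).abs).const_mul (∑' r, |bb q (r + 1)|)
    simpa using this
  have hz : Tendsto (fun N : ℕ => |GG q (w / q ^ N) - 1|) atTop (nhds 0) :=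
    squeeze_zero (fun N => abs_nonneg _)
      (fun N => abs_GG_sub_one_le hq _ (habs N)) hb
  have hz2 : Tendsto (fun N : ℕ => GG q (w / q ^ N) - 1) atTop (nhds 0) := by
    rwa [tendsto_zero_iff_abs_tendsto_zero]
  have := hz2.add_const 1
  simpa using this

end GlAux
namespace GlAux
variable {q u : ℝ} (hq : 1 < |q|)
include hq

lemma abs_lt_one_div_pow (hu : |u| < 1) (k : ℕ) : |u / q ^ (k + 1)| < 1 := by
  rw [abs_div, abs_pow]
  have h1 : (1:ℝ) ≤ |q| ^ (k + 1) := one_le_pow₀ (le_of_lt hq)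
  rw [div_lt_one (by linarith)]
  calc |u| < 1 := hu
    _ ≤ |q| ^ (k + 1) := h1

lemma summable_log_one_add (c : ℝ) (hc : |c| < 1) :
    Summable fun n : ℕ => Real.log (1 + c / q ^ (n + 1)) := by
  apply Summable.of_abs
  have hbound : ∀ n : ℕ, |Real.log (1 + c / q ^ (n + 1))| ≤ (1 / (1 - |c|)) * (|c| * (|q|⁻¹) ^ (n + 1)) := by
    intro n
    have habs : |c / q ^ (n + 1)| ≤ |c| * (|q|⁻¹) ^ (n + 1) := by
      rw [abs_div, abs_pow, div_eq_mul_inv, inv_pow]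
    have hlt : |c / q ^ (n + 1)| < 1 := by
      rw [abs_div, abs_pow]
      have h1 : (1:ℝ) ≤ |q| ^ (n + 1) := one_le_pow₀ (le_of_lt hq)
      rw [div_lt_one (by linarith)]
      linarith
    have := Real.abs_log_sub_add_sum_range_le (x := -(c / q ^ (n + 1))) (by rwa [abs_neg]) 0
    simp only [Finset.range_zero, Finset.sum_empty, zero_add, sub_neg_eq_add, pow_one,
      abs_neg] at this
    calc |Real.log (1 + c / q ^ (n + 1))| ≤ |c / q ^ (n + 1)| / (1 - |c / q ^ (n + 1)|) := by
          simpa using this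
      _ ≤ |c / q ^ (n + 1)| / (1 - |c|) := by
          apply div_le_div_of_nonneg_left (abs_nonneg _) (by linarith)
          have : |c / q ^ (n + 1)| ≤ |c| := by
            rw [abs_div, abs_pow]
            apply div_le_self (abs_nonneg _) (one_le_pow₀ (le_of_lt hq))
          linarith
      _ ≤ (1 / (1 - |c|)) * (|c| * (|q|⁻¹) ^ (n + 1)) := by
          rw [div_eq_mul_inv, mul_comm, one_div]
          apply mul_le_mul_of_nonneg_left habs (inv_nonneg.mpr (by linarith))
  apply Summable.of_nonneg_of_le (fun n => abs_nonneg _) hbound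
  apply Summable.mul_left
  apply Summable.mul_left
  apply (summable_geometric_of_lt_one (by positivity) _).comp_injective (add_left_injective 1)
  rw [inv_lt_one_iff₀]; right; exact hq

lemma multipliable_P (hu : |u| < 1) : Multipliable fun i : ℕ => 1 + u / q ^ (i + 1) := by
  apply Real.multipliable_of_summable_log (f := fun i => 1 + u / q ^ (i + 1))
    (fun n => by have := abs_lt_one_div_pow hq hu n; rw [abs_lt] at this; linarith)
    (summable_log_one_add hq u hu)

lemma multipliable_Q (hu : |u| < 1) : Multipliable fun i : ℕ => 1 - u ^ 2 / q ^ (i + 1) := by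
  have hu2 : |(-(u^2))| < 1 := by
    rw [abs_neg, abs_pow]
    calc |u| ^ 2 ≤ |u| * 1 := by nlinarith [abs_nonneg u]
      _ < 1 := by nlinarith [abs_nonneg u]
  have := Real.multipliable_of_summable_log (f := fun i => 1 + (-(u^2)) / q ^ (i + 1))
    (fun n => by have := abs_lt_one_div_pow hq hu2 n; rw [abs_lt] at this; linarith)
    (summable_log_one_add hq _ hu2)
  apply this.congr
  intro i
  ring

lemma telescope_A (hu : |u| < 1) (N : ℕ) :
    AA q u = (∏ i ∈ Finset.range N, (1 + u / q ^ (i + 1))) * AA q (u / q ^ N) := by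
  have hq0 := q_ne_zero hq
  induction N with
  | zero => simp
  | succ N ih =>
    rw [ih, Finset.prod_range_succ]
    have step := AA_fe hq (u / q ^ N)
    have harg : u / q ^ N / q = u / q ^ (N + 1) := by
      rw [div_div, pow_succ]
    rw [harg] at step
    rw [step]
    ring

end GlAux
namespace GlAux
variable {q u : ℝ} (hq : 1 < |q|)
include hq

lemma abs_pow_arg_le (hu : |u| < 1) (N : ℕ) : |u ^ 2 / q ^ N| ≤ 1 := by
  rw [abs_div, abs_pow, abs_pow]
  have h1 : (1:ℝ) ≤ |q| ^ N := one_le_pow₀ (le_of_lt hq)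
  rw [div_le_one (by linarith)]
  calc |u| ^ 2 ≤ 1 := pow_le_one₀ (abs_nonneg _) (le_of_lt hu)
    _ ≤ |q| ^ N := h1

lemma telescope_G (hu : |u| < 1) (N : ℕ) :
    GG q (u ^ 2) * (∏ i ∈ Finset.range N, (1 - u ^ 2 / q ^ (i + 1))) = GG q (u ^ 2 / q ^ N) := by
  have hq0 := q_ne_zero hq
  induction N with
  | zero => simp
  | succ N ih =>
    rw [Finset.prod_range_succ, ← mul_assoc, ih]
    have step := GG_fe hq (u ^ 2 / q ^ N) (abs_pow_arg_le hq hu N)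
    have harg : u ^ 2 / q ^ N / q = u ^ 2 / q ^ (N + 1) := by
      rw [div_div, pow_succ q N]
    rw [harg] at step
    rw [← step]
    ring

lemma P_eq_AA (hu : |u| < 1) : (∏' i : ℕ, (1 + u / q ^ (i + 1))) = AA q u := by
  have hm := multipliable_P hq hu
  have h1 : Tendsto (fun N : ℕ => (∏ i ∈ Finset.range N, (1 + u / q ^ (i + 1))) * AA q (u / q ^ N))
      atTop (nhds ((∏' i : ℕ, (1 + u / q ^ (i + 1))) * 1)) :=
    (hm.hasProd.tendsto_prod_nat).mul (tendsto_AA_one hq u (le_of_lt hu))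
  have h2 : Tendsto (fun _ : ℕ => AA q u) atTop (nhds (AA q u)) := tendsto_const_nhds
  have heq : (fun N : ℕ => (∏ i ∈ Finset.range N, (1 + u / q ^ (i + 1))) * AA q (u / q ^ N))
      = fun _ : ℕ => AA q u := by
    funext N; exact (telescope_A hq hu N).symm
  rw [heq] at h1
  have := tendsto_nhds_unique h1 h2
  simpa using this

lemma Q_GG_eq_one (hu : |u| < 1) :
    (∏' i : ℕ, (1 - u ^ 2 / q ^ (i + 1))) * GG q (u ^ 2) = 1 := by
  have hm := multipliable_Q hq hu
  have h1 : Tendsto (fun N : ℕ => GG q (u ^ 2) * ∏ i ∈ Finset.range N, (1 - u ^ 2 / q ^ (i + 1)))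
      atTop (nhds (GG q (u ^ 2) * ∏' i : ℕ, (1 - u ^ 2 / q ^ (i + 1)))) :=
    (hm.hasProd.tendsto_prod_nat).const_mul _
  have h2 : Tendsto (fun N : ℕ => GG q (u ^ 2 / q ^ N)) atTop (nhds 1) := by
    have hu2 : |u ^ 2| ≤ 1 := by
      rw [abs_pow]; exact pow_le_one₀ (abs_nonneg _) (le_of_lt hu)
    exact tendsto_GG_one hq (u ^ 2) hu2
  have heq : (fun N : ℕ => GG q (u ^ 2) * ∏ i ∈ Finset.range N, (1 - u ^ 2 / q ^ (i + 1)))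
      = fun N : ℕ => GG q (u ^ 2 / q ^ N) := by
    funext N; exact telescope_G hq hu N
  rw [heq] at h1
  have := tendsto_nhds_unique h1 h2
  rw [mul_comm]
  exact this

end GlAux
namespace GlAux

lemma choose_two_add (a b : ℕ) : (a + b).choose 2 = a.choose 2 + b.choose 2 + a * b := by
  induction b with
  | zero => simp
  | succ b ih =>
    have h1 : a + (b + 1) = (a + b) + 1 := by ring
    rw [h1, Nat.choose_succ_succ, Nat.choose_one_right, ih,
      Nat.choose_succ_succ b, Nat.choose_one_right]
    ring

variable {q u : ℝ} (hq : 1 < |q|)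
include hq

lemma glGamma_eq (j : ℕ) : glGamma q j = q ^ j.choose 2 * PP q j := rfl

lemma bb'_two_mul (r : ℕ) : bb' q (2 * r) = bb q r := by
  unfold bb'
  rw [if_pos ⟨r, rfl⟩]
  congr 1
  omega

lemma bb'_odd (k : ℕ) (h : ¬ 2 ∣ k) : bb' q k = 0 := by
  unfold bb'
  rw [if_neg h]

lemma summable_bb'_norm (v : ℝ) (hv : |v| ≤ 1) :
    Summable fun k => ‖bb' q k * v ^ k‖ := by
  have hinj : Function.Injective (fun r : ℕ => 2 * r) := fun a b h => Nat.eq_of_mul_eq_mul_left two_pos h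
  have hzero : ∀ k ∉ Set.range (fun r : ℕ => 2 * r), ‖bb' q k * v ^ k‖ = 0 := by
    intro k hk
    have : ¬ 2 ∣ k := by
      intro ⟨c, hc⟩; exact hk ⟨c, hc.symm⟩
    rw [bb'_odd hq k this]
    simp
  rw [← Function.Injective.summable_iff hinj hzero]
  have hv2 : |v ^ 2| ≤ 1 := by
    rw [abs_pow]
    exact pow_le_one₀ (abs_nonneg _) hv
  apply (summable_bb_norm hq (v ^ 2) hv2).congr
  intro r
  show ‖bb q r * (v ^ 2) ^ r‖ = ‖bb' q (2 * r) * v ^ (2 * r)‖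
  rw [bb'_two_mul hq, ← pow_mul]

lemma tsum_bb'_eq (v : ℝ) : (∑' k, bb' q k * v ^ k) = GG q (v ^ 2) := by
  have hinj : Function.Injective (fun r : ℕ => 2 * r) := fun a b h => Nat.eq_of_mul_eq_mul_left two_pos h
  have hzero : Function.support (fun k => bb' q k * v ^ k) ⊆ Set.range (fun r : ℕ => 2 * r) := by
    intro k hk
    by_contra hk2
    apply hk
    have : ¬ 2 ∣ k := by
      intro ⟨c, hc⟩; exact hk2 ⟨c, hc.symm⟩
    show bb' q k * v ^ k = 0
    rw [bb'_odd hq k this]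
    simp
  rw [← Function.Injective.tsum_eq hinj hzero]
  unfold GG
  apply tsum_congr
  intro r
  show bb' q (2 * r) * v ^ (2 * r) = bb q r * (v ^ 2) ^ r
  rw [bb'_two_mul hq, ← pow_mul]

lemma term_eq (n r : ℕ) (h2r : 2 * r ≤ n) :
    aa q (n - 2 * r) * bb q r =
      q ^ n.choose 2 * (1 / (q ^ (r * (2 * n - 3 * r)) * glGamma q r * glGamma q (n - 2 * r))) := by
  obtain ⟨m, rfl⟩ : ∃ m, n = m + 2 * r := ⟨n - 2 * r, by omega⟩
  have hm : m + 2 * r - 2 * r = m := by omega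
  have hexp : 2 * (m + 2 * r) - 3 * r = 2 * m + r := by omega
  rw [hm, hexp]
  have hch : (m + 2 * r).choose 2 = r * (2 * m + r) + (r.choose 2 + (r.choose 2 + m.choose 2)) := by
    rw [show m + 2 * r = m + (r + r) by ring, choose_two_add, choose_two_add r r]
    ring
  rw [hch, glGamma_eq hq, glGamma_eq hq]
  rw [pow_add, pow_add, pow_add]
  unfold aa bb
  have h1 := PP_ne_zero hq m
  have h2 := PP_ne_zero hq r
  have h3 := q_ne_zero hq
  field_simp

lemma cauchy_eq (hu : |u| < 1) :
    AA q u * GG q (u ^ 2) =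
      ∑' n : ℕ, u ^ n * q ^ n.choose 2 *
        ∑ r ∈ Finset.range (n / 2 + 1),
          1 / (q ^ (r * (2 * n - 3 * r)) * glGamma q r * glGamma q (n - 2 * r)) := by
  have hu1 : |u| ≤ 1 := le_of_lt hu
  rw [← tsum_bb'_eq hq u]
  unfold AA
  rw [tsum_mul_tsum_eq_tsum_sum_range_of_summable_norm
    (summable_aa_norm hq u) (summable_bb'_norm hq u hu1)]
  apply tsum_congr
  intro n
  -- step 1: pull out u^n
  have step1 : ∑ k ∈ Finset.range (n + 1), (aa q k * u ^ k) * (bb' q (n - k) * u ^ (n - k))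
      = (∑ k ∈ Finset.range (n + 1), aa q k * bb' q (n - k)) * u ^ n := by
    rw [Finset.sum_mul]
    apply Finset.sum_congr rfl
    intro k hk
    have hkn : k ≤ n := by simpa using Nat.lt_succ_iff.mp (Finset.mem_range.mp hk)
    have : u ^ k * u ^ (n - k) = u ^ n := by
      rw [← pow_add]
      congr 1
      omega
    calc aa q k * u ^ k * (bb' q (n - k) * u ^ (n - k))
        = aa q k * bb' q (n - k) * (u ^ k * u ^ (n - k)) := by ring
      _ = aa q k * bb' q (n - k) * u ^ n := by rw [this]
  rw [step1]
  -- step 2: reflect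
  have step2 : ∑ k ∈ Finset.range (n + 1), aa q k * bb' q (n - k)
      = ∑ j ∈ Finset.range (n + 1), aa q (n - j) * bb' q j := by
    rw [← Finset.sum_range_reflect (fun j => aa q (n - j) * bb' q j) (n + 1)]
    apply Finset.sum_congr rfl
    intro k hk
    have hkn : k ≤ n := by simpa using Nat.lt_succ_iff.mp (Finset.mem_range.mp hk)
    congr 2 <;> omega
  rw [step2]
  -- step 3: restrict to even indices
  have hsub : (Finset.range (n / 2 + 1)).image (fun r => 2 * r) ⊆ Finset.range (n + 1) := by
    intro j hj
    rw [Finset.mem_image] at hj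
    obtain ⟨r, hr, rfl⟩ := hj
    rw [Finset.mem_range] at hr ⊢
    omega
  have hzero : ∀ j ∈ Finset.range (n + 1),
      j ∉ (Finset.range (n / 2 + 1)).image (fun r => 2 * r) → aa q (n - j) * bb' q j = 0 := by
    intro j hj hnotin
    have : ¬ 2 ∣ j := by
      intro ⟨c, hc⟩
      apply hnotin
      rw [Finset.mem_image]
      refine ⟨c, ?_, hc.symm⟩
      rw [Finset.mem_range] at hj ⊢
      omega
    rw [bb'_odd hq j this]
    ring
  have step3 : ∑ j ∈ Finset.range (n + 1), aa q (n - j) * bb' q j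
      = ∑ r ∈ Finset.range (n / 2 + 1), aa q (n - 2 * r) * bb q r := by
    rw [← Finset.sum_subset hsub hzero, Finset.sum_image (fun x _ y _ h => Nat.eq_of_mul_eq_mul_left two_pos h)]
    apply Finset.sum_congr rfl
    intro r hr
    rw [bb'_two_mul hq]
  rw [step3]
  -- step 4: termwise gamma algebra
  have step4 : ∑ r ∈ Finset.range (n / 2 + 1), aa q (n - 2 * r) * bb q r
      = q ^ n.choose 2 * ∑ r ∈ Finset.range (n / 2 + 1),
          1 / (q ^ (r * (2 * n - 3 * r)) * glGamma q r * glGamma q (n - 2 * r)) := by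
    rw [Finset.mul_sum]
    apply Finset.sum_congr rfl
    intro r hr
    rw [Finset.mem_range] at hr
    exact term_eq hq n r (by omega)
  rw [step4]
  ring

end GlAux

/-- The power series identity
`∏_{i ≥ 1} (1 + u/qⁱ) / ∏_{i ≥ 1} (1 - u²/qⁱ)
  = ∑_{n ≥ 0} uⁿ q^(n choose 2) ∑_{r=0}^{⌊n/2⌋} 1/(q^{r(2n-3r)} γ_r γ_{n-2r})`,
stated as a convergent identity of real numbers for `|q| > 1` and `|u| < 1` (which
determines the underlying formal power series identity in `u`). -/
theorem gl_even_q_series_identity (q u : ℝ) (hq : 1 < |q|) (hu : |u| < 1) :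
    (∏' i : ℕ, (1 + u / q ^ (i + 1))) / (∏' i : ℕ, (1 - u ^ 2 / q ^ (i + 1))) =
      ∑' n : ℕ, u ^ n * q ^ n.choose 2 *
        ∑ r ∈ Finset.range (n / 2 + 1),
          1 / (q ^ (r * (2 * n - 3 * r)) * glGamma q r * glGamma q (n - 2 * r)) := by
  rw [← GlAux.cauchy_eq hq hu, ← GlAux.P_eq_AA hq hu]
  have hQG := GlAux.Q_GG_eq_one hq hu
  have hQ : (∏' i : ℕ, (1 - u ^ 2 / q ^ (i + 1))) ≠ 0 := by
    intro h
    rw [h] at hQG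
    simp at hQG
  rw [div_eq_iff hQ, mul_assoc, mul_comm (GlAux.GG q (u ^ 2)) _, hQG, mul_one]
end

section
/- For any q with |q| > 1, the following formal power series identity in u holds: (prod_{i >= 1} (1 + u/q^i)^2) / (prod_{i >= 1} (1 - u^2/q^i)) = sum_{n >= 0} u^n q^{binom(n,2)} sum_{r=0}^{n} 1/(gamma_r gamma_{n-r}). -/
open Finset

namespace GLAux

/-- `P q r = (q-1)(q^2-1)⋯(q^r-1)`. -/
noncomputable def P (q : ℝ) (r : ℕ) : ℝ := ∏ i ∈ Finset.range r, (q ^ (i + 1) - 1)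

noncomputable def d (q : ℝ) (n r : ℕ) : ℝ := q ^ (r * (n - r)) / (P q r * P q (n - r))

noncomputable def c (q : ℝ) (n : ℕ) : ℝ := ∑ r ∈ Finset.range (n + 1), d q n r

noncomputable def S (q : ℝ) (n : ℕ) : ℝ := ∑ r ∈ Finset.range (n + 1), q ^ r * d q n r

variable {q : ℝ}

lemma q_ne_zero (hq : 1 < |q|) : q ≠ 0 := by
  intro h; rw [h] at hq; norm_num at hq

lemma qpow_sub_one_ne (hq : 1 < |q|) (k : ℕ) : q ^ (k + 1) - 1 ≠ 0 := by
  intro h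
  have h1 : q ^ (k + 1) = 1 := by linarith [sub_eq_zero.mp h]
  have h2 : |q ^ (k + 1)| = 1 := by rw [h1]; simp
  rw [abs_pow] at h2
  have : 1 < |q| ^ (k + 1) := one_lt_pow₀ hq (Nat.succ_ne_zero k)
  linarith

lemma P_ne (hq : 1 < |q|) (r : ℕ) : P q r ≠ 0 :=
  Finset.prod_ne_zero_iff.mpr fun i _ => qpow_sub_one_ne hq i

lemma P_succ (r : ℕ) : P q (r + 1) = P q r * (q ^ (r + 1) - 1) := by
  rw [P, Finset.prod_range_succ]; rfl

lemma P_zero : P q 0 = 1 := by simp [P]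

lemma d_symm {n r : ℕ} (h : r ≤ n) : d q n r = d q n (n - r) := by
  have h1 : n - (n - r) = r := Nat.sub_sub_self h
  rw [d, d, h1, mul_comm (P q (n-r)), Nat.mul_comm]

/-- relation (2): `(q^(n-r) - 1) d(n,r) = q^r d(n-1,r)`, for `r < n`, stated in shifted form. -/
lemma L2 (hq : 1 < |q|) {n r : ℕ} (h : r ≤ n) :
    (q ^ (n + 1 - r) - 1) * d q (n + 1) r = q ^ r * d q n r := by
  rcases Nat.exists_eq_add_of_le h with ⟨k, rfl⟩
  have h1 : r + k + 1 - r = k + 1 := by omega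
  have h2 : r + k - r = k := by omega
  have h3 : r * (k + 1) = r + r * k := by ring
  have hr := P_ne hq r; have hk := P_ne hq k; have hx := qpow_sub_one_ne hq k
  rw [d, d, h1, h2, h3, P_succ, ← mul_div_assoc, ← mul_div_assoc,
    div_eq_div_iff (by exact mul_ne_zero hr (mul_ne_zero hk hx)) (mul_ne_zero hr hk)]
  ring

/-- relation (4): `(q^r-1)(q^(n-r)-1) d(n,r) = q^(n-1) d(n-2,r-1)`, shifted form. -/
lemma L4 (hq : 1 < |q|) {m r : ℕ} (h : r ≤ m) :
    (q ^ (r + 1) - 1) * (q ^ (m + 1 - r) - 1) * d q (m + 2) (r + 1) = q ^ (m + 1) * d q m r := by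
  rcases Nat.exists_eq_add_of_le h with ⟨k, rfl⟩
  have h1 : r + k + 2 - (r + 1) = k + 1 := by omega
  have h2 : r + k + 1 - r = k + 1 := by omega
  have h3 : r + k - r = k := by omega
  have h4 : (r + 1) * (k + 1) = r * k + (r + k + 1) := by ring
  have hr := P_ne hq r; have hk := P_ne hq k
  have hxr := qpow_sub_one_ne hq r; have hxk := qpow_sub_one_ne hq k
  rw [d, d, h1, h2, h3, h4, P_succ, P_succ, ← mul_div_assoc, ← mul_div_assoc,
    div_eq_div_iff (by exact mul_ne_zero (mul_ne_zero hr hxr) (mul_ne_zero hk hxk))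
      (mul_ne_zero hr hk)]
  ring

lemma S_reflect (n : ℕ) : ∑ r ∈ Finset.range (n + 1), q ^ (n - r) * d q n r = S q n := by
  rw [S, ← Finset.sum_range_reflect (fun r => q ^ r * d q n r) (n + 1)]
  apply Finset.sum_congr rfl
  intro r hr
  rw [Finset.mem_range] at hr
  have h1 : n + 1 - 1 - r = n - r := by omega
  rw [h1, ← d_symm (show r ≤ n by omega)]

lemma five (hq : 1 < |q|) (n : ℕ) : S q (n + 1) = S q n + c q (n + 1) := by
  rw [← S_reflect (n + 1)]
  have h2 : ∀ r ∈ Finset.range (n + 2),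
      q ^ (n + 1 - r) * d q (n + 1) r = (q ^ (n + 1 - r) - 1) * d q (n + 1) r + d q (n + 1) r := by
    intros; ring
  rw [Finset.sum_congr rfl h2, Finset.sum_add_distrib]
  congr 1
  · rw [Finset.sum_range_succ]
    have h3 : (q ^ (n + 1 - (n + 1)) - 1) * d q (n + 1) (n + 1) = 0 := by simp
    rw [h3, add_zero, S]
    exact Finset.sum_congr rfl fun r hr =>
      L2 hq (by rw [Finset.mem_range] at hr; omega)

lemma c_zero : c q 0 = 1 := by simp [c, d, P]

lemma S_zero : S q 0 = 1 := by simp [S, d, P]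

lemma seven (hq : 1 < |q|) (m : ℕ) :
    (q ^ (m + 2) + 1) * c q (m + 2) = q ^ (m + 1) * c q m + 2 * S q (m + 2) := by
  rw [c, Finset.mul_sum]
  have key : ∀ r ∈ Finset.range (m + 3),
      (q ^ (m + 2) + 1) * d q (m + 2) r =
        (q ^ r - 1) * (q ^ (m + 2 - r) - 1) * d q (m + 2) r
          + (q ^ r + q ^ (m + 2 - r)) * d q (m + 2) r := by
    intro r hr
    rw [Finset.mem_range] at hr
    have h : q ^ r * q ^ (m + 2 - r) = q ^ (m + 2) := by
      rw [← pow_add]; congr 1; omega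
    linear_combination (-(d q (m + 2) r)) * h
  rw [Finset.sum_congr rfl key, Finset.sum_add_distrib]
  congr 1
  · -- middle-terms sum equals q^(m+1) * c q m
    rw [Finset.sum_range_succ']
    have h0 : (q ^ 0 - 1) * (q ^ (m + 2 - 0) - 1) * d q (m + 2) 0 = 0 := by simp
    rw [h0, add_zero, Finset.sum_range_succ]
    have hl : (q ^ (m + 1 + 1) - 1) * (q ^ (m + 2 - (m + 1 + 1)) - 1) * d q (m + 2) (m + 1 + 1)
        = 0 := by simp
    rw [hl, add_zero, c, Finset.mul_sum]
    apply Finset.sum_congr rfl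
    intro r hr
    rw [Finset.mem_range] at hr
    have h4 : m + 2 - (r + 1) = m + 1 - r := by omega
    rw [h4]
    exact L4 hq (by omega)
  · -- (q^r + q^(m+2-r)) sum equals 2 * S (m+2)
    have h2 : ∀ r ∈ Finset.range (m + 3),
        (q ^ r + q ^ (m + 2 - r)) * d q (m + 2) r =
          q ^ r * d q (m + 2) r + q ^ (m + 2 - r) * d q (m + 2) r := by
      intros; ring
    rw [Finset.sum_congr rfl h2, Finset.sum_add_distrib]
    have := S_reflect (q := q) (m + 2)
    rw [show m + 2 + 1 = m + 3 from rfl] at this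
    rw [this, two_mul, S]

lemma seven1 (hq : 1 < |q|) : (q + 1) * c q 1 = 2 * S q 1 := by
  have h1 : P q 1 = q - 1 := by rw [show (1:ℕ) = 0 + 1 from rfl, P_succ, P_zero]; ring
  have hne : q - 1 ≠ 0 := by
    have := qpow_sub_one_ne hq 0; simpa using this
  simp only [c, S, d, Finset.sum_range_succ, Finset.sum_range_zero, h1, P]
  norm_num
  field_simp
  ring

lemma R1 (hq : 1 < |q|) : (q - 1) * c q 1 = 2 := by
  have h7 := seven1 hq
  have h5 := five hq 0
  have h0 := S_zero (q := q)
  linarith [h7, h5]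

lemma R2 (hq : 1 < |q|) : (q ^ 2 - 1) * c q 2 = q * c q 0 + (q + 1) * c q 1 := by
  have h7 := seven hq 0
  have h5 := five hq 1
  have h71 := seven1 hq
  norm_num at h7
  linarith

lemma R3 (hq : 1 < |q|) :
    (q ^ 3 - 1) * c q 3 = (q ^ 2 + q + 1) * c q 1 + 2 * c q 2 := by
  have h7 := seven hq 1
  have h52 := five hq 1
  have h53 := five hq 2
  have h71 := seven1 hq
  norm_num at h7
  linarith

lemma R4 (hq : 1 < |q|) (m : ℕ) :
    (q ^ (m + 4) - 1) * c q (m + 4) =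
      2 * c q (m + 3) + (q ^ (m + 3) + q ^ (m + 2) + 1) * c q (m + 2) - q ^ (m + 1) * c q m := by
  have h7a := seven hq (m + 2)
  have h7b := seven hq m
  have h5a := five hq (m + 3)
  have h5b := five hq (m + 2)
  norm_num at h7a h7b h5a h5b
  linarith
/-! ### Bounds -/

/-- triangular-number exponent -/
def T (r : ℕ) : ℕ := ∑ i ∈ Finset.range r, (i + 1)

lemma T_two (r : ℕ) : 2 * T r = r * r + r := by
  induction r with
  | zero => simp [T]
  | succ k ih => rw [T, Finset.sum_range_succ, ← T]; ring_nf; ring_nf at ih; omega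

noncomputable def Kc (q : ℝ) : ℝ := Real.exp (|q|⁻¹ / ((1 - |q|⁻¹) * (1 - |q|⁻¹)))

noncomputable def sig (q : ℝ) : ℝ := Real.sqrt |q|⁻¹

lemma Kc_pos (q : ℝ) : 0 < Kc q := Real.exp_pos _

lemma hs_pos (hq : 1 < |q|) : 0 < |q|⁻¹ := inv_pos.mpr (by linarith)

lemma hs_lt_one (hq : 1 < |q|) : |q|⁻¹ < 1 := inv_lt_one_of_one_lt₀ hq

lemma sig_nonneg (q : ℝ) : 0 ≤ sig q := Real.sqrt_nonneg _

lemma sig_lt_one (hq : 1 < |q|) : sig q < 1 := by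
  rw [sig, show (1:ℝ) = Real.sqrt 1 by simp]
  exact Real.sqrt_lt_sqrt (le_of_lt (hs_pos hq)) (hs_lt_one hq)

lemma sig_sq (hq : 1 < |q|) : sig q ^ 2 = |q|⁻¹ := Real.sq_sqrt (le_of_lt (hs_pos hq))

/-- `exp (-(x/(1-b))) ≤ 1 - x` for `0 ≤ x ≤ b < 1`. -/
lemma exp_lb {x b : ℝ} (hx : 0 ≤ x) (hxb : x ≤ b) (hb : b < 1) :
    Real.exp (-(x / (1 - b))) ≤ 1 - x := by
  have h1 : 0 < 1 - b := by linarith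
  have h2 : 1 ≤ (1 - x) * Real.exp (x / (1 - b)) := by
    have he := Real.add_one_le_exp (x / (1 - b))
    have h3 : (1 - x) * (x / (1 - b) + 1) = 1 + x * (b - x) / (1 - b) := by
      field_simp; ring
    nlinarith [Real.exp_pos (x / (1 - b)), mul_nonneg hx (sub_nonneg.mpr hxb),
      div_nonneg (mul_nonneg hx (sub_nonneg.mpr hxb)) (le_of_lt h1)]
  rw [Real.exp_neg, inv_eq_one_div, div_le_iff₀ (Real.exp_pos _)]
  linarith

lemma geom_tail_le (hq : 1 < |q|) (r : ℕ) :
    ∑ i ∈ Finset.range r, |q|⁻¹ ^ (i + 1) ≤ |q|⁻¹ / (1 - |q|⁻¹) := by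
  set s := |q|⁻¹ with hsdef
  have hs0 := hs_pos hq
  have hs1 := hs_lt_one hq
  have hne : s ≠ 1 := ne_of_lt hs1
  calc ∑ i ∈ Finset.range r, s ^ (i + 1) = s * ∑ i ∈ Finset.range r, s ^ i := by
        rw [Finset.mul_sum]; exact Finset.sum_congr rfl fun i _ => by rw [pow_succ]; ring
    _ = s * ((s ^ r - 1) / (s - 1)) := by rw [geom_sum_eq hne]
    _ ≤ s * (1 / (1 - s)) := by
        apply mul_le_mul_of_nonneg_left _ (le_of_lt hs0)
        rw [show (s ^ r - 1) / (s - 1) = (1 - s ^ r) / (1 - s) by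
          rw [div_eq_div_iff (by linarith) (by linarith)]; ring]
        apply div_le_div_of_nonneg_right _ (by linarith)
        nlinarith [pow_nonneg (le_of_lt hs0) r]
    _ = s / (1 - s) := by ring

/-- Core lower bound on `|P q r|`. -/
lemma P_lb (hq : 1 < |q|) (r : ℕ) : |q| ^ T r ≤ Kc q * |P q r| := by
  set s := |q|⁻¹ with hsdef
  have hs0 := hs_pos hq
  have hs1 := hs_lt_one hq
  have hq0 : (0:ℝ) < |q| := by linarith
  have step1 : ∏ i ∈ Finset.range r, (|q| ^ (i + 1) - 1) ≤ |P q r| := by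
    rw [P, abs_prod]
    apply Finset.prod_le_prod
    · intro i _
      have : (1:ℝ) ≤ |q| ^ (i + 1) := one_le_pow₀ (le_of_lt hq)
      linarith
    · intro i _
      calc |q| ^ (i + 1) - 1 = |q ^ (i + 1)| - |(1:ℝ)| := by rw [abs_pow]; simp
        _ ≤ |q ^ (i + 1) - 1| := abs_sub_abs_le_abs_sub _ _
  have step2 : ∏ i ∈ Finset.range r, (|q| ^ (i + 1) - 1)
      = |q| ^ T r * ∏ i ∈ Finset.range r, (1 - s ^ (i + 1)) := by
    calc ∏ i ∈ Finset.range r, (|q| ^ (i + 1) - 1)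
        = ∏ i ∈ Finset.range r, (|q| ^ (i + 1) * (1 - s ^ (i + 1))) := by
          refine Finset.prod_congr rfl fun i _ => ?_
          have h5 : |q| ^ (i + 1) * s ^ (i + 1) = 1 := by
            rw [hsdef, ← mul_pow, mul_inv_cancel₀ (ne_of_gt hq0), one_pow]
          nlinarith
      _ = (∏ i ∈ Finset.range r, |q| ^ (i + 1)) * ∏ i ∈ Finset.range r, (1 - s ^ (i + 1)) :=
          Finset.prod_mul_distrib
      _ = |q| ^ T r * ∏ i ∈ Finset.range r, (1 - s ^ (i + 1)) := by
          rw [Finset.prod_pow_eq_pow_sum]; rfl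
  have step3 : Real.exp (-(s / ((1 - s) * (1 - s)))) ≤ ∏ i ∈ Finset.range r, (1 - s ^ (i + 1)) := by
    have hsum := geom_tail_le hq r
    calc Real.exp (-(s / ((1 - s) * (1 - s))))
        ≤ Real.exp (∑ i ∈ Finset.range r, -(s ^ (i + 1) / (1 - s))) := by
          apply Real.exp_le_exp.mpr
          have e1 : ∑ i ∈ Finset.range r, -(s ^ (i + 1) / (1 - s))
              = -((∑ i ∈ Finset.range r, s ^ (i + 1)) / (1 - s)) := by
            rw [Finset.sum_div, ← Finset.sum_neg_distrib]
          rw [e1, neg_le_neg_iff]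
          calc (∑ i ∈ Finset.range r, s ^ (i + 1)) / (1 - s)
              ≤ (s / (1 - s)) / (1 - s) :=
                div_le_div_of_nonneg_right hsum (by linarith)
            _ = s / ((1 - s) * (1 - s)) := by rw [div_div]
      _ = ∏ i ∈ Finset.range r, Real.exp (-(s ^ (i + 1) / (1 - s))) := (Real.exp_sum _ _)
      _ ≤ ∏ i ∈ Finset.range r, (1 - s ^ (i + 1)) := by
          refine Finset.prod_le_prod (fun i _ => le_of_lt (Real.exp_pos _)) fun i _ => ?_
          apply exp_lb (pow_nonneg (le_of_lt hs0) _) _ hs1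
          calc s ^ (i + 1) ≤ s ^ 1 := pow_le_pow_of_le_one (le_of_lt hs0) (le_of_lt hs1) (by omega)
            _ = s := pow_one s
  have h4 : |q| ^ T r * (Kc q)⁻¹ ≤ |P q r| := by
    calc |q| ^ T r * (Kc q)⁻¹ = |q| ^ T r * Real.exp (-(s / ((1 - s) * (1 - s)))) := by
          rw [Kc, ← Real.exp_neg]
      _ ≤ |q| ^ T r * ∏ i ∈ Finset.range r, (1 - s ^ (i + 1)) :=
          mul_le_mul_of_nonneg_left step3 (pow_nonneg (abs_nonneg q) _)
      _ = ∏ i ∈ Finset.range r, (|q| ^ (i + 1) - 1) := step2.symm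
      _ ≤ |P q r| := step1
  calc |q| ^ T r = Kc q * (|q| ^ T r * (Kc q)⁻¹) := by
        field_simp
        rw [div_self (ne_of_gt (Kc_pos q))]
      _ ≤ Kc q * |P q r| := mul_le_mul_of_nonneg_left h4 (le_of_lt (Kc_pos q))
lemma P_abs_pos (hq : 1 < |q|) (r : ℕ) : 0 < |P q r| := abs_pos.mpr (P_ne hq r)

/-- The key decay bound for a single term. -/
lemma d_bound (hq : 1 < |q|) {n r : ℕ} (h : r ≤ n) :
    |d q n r| ≤ Kc q ^ 2 * sig q ^ n := by
  have hq0 : (0:ℝ) < |q| := by linarith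
  set m := n - r with hm
  have hn : r + m = n := by omega
  -- 2*(T r + T m) ≥ n + 2*r*m  (hence the `s`-exponent is at least n/2)
  have hrm : 2 * (r * m) ≤ r * r + m * m := by
    have h1 : (2:ℤ) * (r * m) ≤ r * r + m * m := by nlinarith [sq_nonneg ((r:ℤ) - m)]
    exact_mod_cast h1
  have hle : r * m ≤ T r + T m := by
    have := T_two r; have := T_two m; omega
  set e := T r + T m - r * m with he
  have h2e : n ≤ 2 * e := by
    have := T_two r; have := T_two m; omega
  -- |d| = |q|^(r*m) / (|P r| * |P m|)
  have habs : |d q n r| = |q| ^ (r * m) / (|P q r| * |P q m|) := by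
    rw [d, abs_div, abs_mul, abs_pow, ← hm]
  rw [habs]
  have hPr := P_lb hq r
  have hPm := P_lb hq m
  have hKpos := Kc_pos q
  have key : |q| ^ (r * m) / (|P q r| * |P q m|) ≤ Kc q ^ 2 * (|q| ^ (r * m) / |q| ^ (T r + T m)) := by
    rw [div_le_iff₀ (mul_pos (P_abs_pos hq r) (P_abs_pos hq m))]
    have expand : Kc q ^ 2 * (|q| ^ (r * m) / |q| ^ (T r + T m)) * (|P q r| * |P q m|)
        = (|q| ^ (r * m) / |q| ^ (T r + T m)) * ((Kc q * |P q r|) * (Kc q * |P q m|)) := by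
      ring
    rw [expand]
    calc |q| ^ (r * m) = (|q| ^ (r * m) / |q| ^ (T r + T m)) * (|q| ^ (T r) * |q| ^ (T m)) := by
          rw [← pow_add]; field_simp
      _ ≤ (|q| ^ (r * m) / |q| ^ (T r + T m)) * ((Kc q * |P q r|) * (Kc q * |P q m|)) := by
          apply mul_le_mul_of_nonneg_left _ (by positivity)
          exact mul_le_mul hPr hPm (pow_nonneg (abs_nonneg q) _) (by positivity)
  refine key.trans ?_
  apply mul_le_mul_of_nonneg_left _ (by positivity)
  -- |q|^(r*m) / |q|^(T r + T m) = s^e = sig^(2e) ≤ sig^n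
  have hsplit : T r + T m = r * m + e := by omega
  have h5 : |q| ^ (r * m) / |q| ^ (T r + T m) = (|q|⁻¹) ^ e := by
    rw [hsplit, pow_add, inv_pow]
    field_simp
  rw [h5, ← sig_sq hq, ← pow_mul]
  exact pow_le_pow_of_le_one (sig_nonneg q) (le_of_lt (sig_lt_one hq)) h2e

lemma c_bound (hq : 1 < |q|) (n : ℕ) :
    |c q n| ≤ ((n:ℝ) + 1) * Kc q ^ 2 * sig q ^ n := by
  rw [c]
  calc |∑ r ∈ Finset.range (n + 1), d q n r| ≤ ∑ r ∈ Finset.range (n + 1), |d q n r| :=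
        Finset.abs_sum_le_sum_abs _ _
    _ ≤ ∑ _r ∈ Finset.range (n + 1), Kc q ^ 2 * sig q ^ n :=
        Finset.sum_le_sum fun r hr => d_bound hq (by rw [Finset.mem_range] at hr; omega)
    _ = ((n:ℝ) + 1) * Kc q ^ 2 * sig q ^ n := by
        rw [Finset.sum_const, Finset.card_range, nsmul_eq_mul]
        push_cast; ring

lemma summable_master (hq : 1 < |q|) :
    Summable (fun n : ℕ => ((n:ℝ) + 1) * Kc q ^ 2 * sig q ^ n) := by
  have h1 : Summable (fun n : ℕ => (n : ℝ) * sig q ^ n) := by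
    have := summable_pow_mul_geometric_of_norm_lt_one 1
      (show ‖sig q‖ < 1 by rw [Real.norm_eq_abs, abs_of_nonneg (sig_nonneg q)]; exact sig_lt_one hq)
    simpa using this
  have h2 : Summable (fun n : ℕ => sig q ^ n) :=
    summable_geometric_of_lt_one (sig_nonneg q) (sig_lt_one hq)
  have h3 := (h1.add h2).mul_left (Kc q ^ 2)
  apply h3.congr
  intro n
  ring

lemma summable_cw (hq : 1 < |q|) {w : ℝ} (hw : |w| ≤ 1) :
    Summable (fun n : ℕ => c q n * w ^ n) := by
  apply Summable.of_norm_bounded (summable_master hq)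
  intro n
  rw [Real.norm_eq_abs, abs_mul, abs_pow]
  calc |c q n| * |w| ^ n ≤ |c q n| * 1 := by
        apply mul_le_mul_of_nonneg_left _ (abs_nonneg _)
        exact pow_le_one₀ (abs_nonneg w) hw
    _ = |c q n| := mul_one _
    _ ≤ ((n:ℝ) + 1) * Kc q ^ 2 * sig q ^ n := c_bound hq n
/-! ### The series `G` and shifts -/

noncomputable def sh (q : ℝ) (k n : ℕ) : ℝ := if k ≤ n then c q (n - k) else 0

lemma sh_zero (n : ℕ) : sh q 0 n = c q n := by simp [sh]

lemma sh_succ_succ (k n : ℕ) : sh q (k + 1) (n + 1) = sh q k n := by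
  simp only [sh, Nat.add_le_add_iff_right, Nat.succ_sub_succ]

lemma sh_at_zero (k : ℕ) (hk : 0 < k) : sh q k 0 = 0 := by
  unfold sh; rw [if_neg (by omega)]

lemma sh_le {k n : ℕ} (h : k ≤ n) : sh q k n = c q (n - k) := if_pos h

/-- summability and value of shifted series, by induction on the shift. -/
lemma sh_tsum (hq : 1 < |q|) {w : ℝ} (hw : |w| ≤ 1) (k : ℕ) :
    Summable (fun n => sh q k n * w ^ n) ∧
      ∑' n, sh q k n * w ^ n = w ^ k * ∑' n, c q n * w ^ n := by
  induction k with
  | zero =>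
    constructor
    · exact (summable_cw hq hw).congr fun n => by rw [sh_zero]
    · rw [pow_zero, one_mul]
      exact tsum_congr fun n => by rw [sh_zero]
  | succ k ih =>
    have hstep : ∀ n : ℕ, sh q (k + 1) (n + 1) * w ^ (n + 1) = (sh q k n * w ^ n) * w := by
      intro n
      rw [sh_succ_succ, pow_succ]
      ring
    have hsum1 : Summable (fun n => sh q (k + 1) (n + 1) * w ^ (n + 1)) := by
      exact (ih.1.mul_right w).congr fun n => (hstep n).symm
    have hsum : Summable (fun n => sh q (k + 1) n * w ^ n) :=
      (summable_nat_add_iff 1).mp hsum1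
    refine ⟨hsum, ?_⟩
    rw [Summable.tsum_eq_zero_add hsum]
    have h0 : sh q (k + 1) 0 * w ^ 0 = 0 := by rw [sh_at_zero _ (Nat.succ_pos k)]; ring
    rw [h0, zero_add]
    calc ∑' n, sh q (k + 1) (n + 1) * w ^ (n + 1)
        = ∑' n, (sh q k n * w ^ n) * w := tsum_congr hstep
      _ = (∑' n, sh q k n * w ^ n) * w := tsum_mul_right
      _ = (w ^ k * ∑' n, c q n * w ^ n) * w := by rw [ih.2]
      _ = w ^ (k + 1) * ∑' n, c q n * w ^ n := by rw [pow_succ]; ring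

/-- tail bound constant -/
noncomputable def Ms (q : ℝ) : ℝ := ∑' n : ℕ, ((n : ℝ) + 2) * Kc q ^ 2 * sig q ^ (n + 1)

lemma summable_Ms (hq : 1 < |q|) :
    Summable (fun n : ℕ => ((n : ℝ) + 2) * Kc q ^ 2 * sig q ^ (n + 1)) := by
  have h1 : Summable (fun n : ℕ => ((n : ℝ) + 1 + 1) * Kc q ^ 2 * (sig q ^ n * sig q)) := by
    have := ((summable_master hq).add
      ((summable_geometric_of_lt_one (sig_nonneg q) (sig_lt_one hq)).mul_left (Kc q ^ 2))).mul_right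
      (sig q)
    apply this.congr
    intro n; ring
  exact h1.congr fun n => by rw [pow_succ]; push_cast; ring

set_option maxHeartbeats 1000000 in
lemma G_sub_one_bound (hq : 1 < |q|) {w : ℝ} (hw : |w| ≤ 1) :
    |(∑' n, c q n * w ^ n) - 1| ≤ Ms q * |w| := by
  have hsum := summable_cw hq hw
  have hshift : Summable (fun n => c q (n + 1) * w ^ (n + 1)) :=
    (summable_nat_add_iff 1).mpr hsum
  have h0 : (∑' n, c q n * w ^ n) = 1 + ∑' n, c q (n + 1) * w ^ (n + 1) := by
    rw [Summable.tsum_eq_zero_add hsum, c_zero, pow_zero, mul_one]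
  rw [h0, add_sub_cancel_left]
  have habs : Summable (fun n => |c q (n + 1) * w ^ (n + 1)|) := hshift.abs
  have hMsw : Summable (fun n : ℕ => (((n : ℝ) + 2) * Kc q ^ 2 * sig q ^ (n + 1)) * |w|) :=
    (summable_Ms hq).mul_right _
  have hterm : ∀ n : ℕ, |c q (n + 1) * w ^ (n + 1)|
      ≤ (((n : ℝ) + 2) * Kc q ^ 2 * sig q ^ (n + 1)) * |w| := by
    intro n
    rw [abs_mul, abs_pow]
    have hb := c_bound hq (n + 1)
    have h2 : |w| ^ n ≤ 1 := pow_le_one₀ (abs_nonneg w) hw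
    have h3 : |c q (n + 1)| * |w| ^ (n + 1) ≤ |c q (n + 1)| * |w| := by
      rw [pow_succ, ← mul_assoc]
      apply mul_le_mul_of_nonneg_right _ (abs_nonneg w)
      calc |c q (n + 1)| * |w| ^ n ≤ |c q (n + 1)| * 1 :=
            mul_le_mul_of_nonneg_left h2 (abs_nonneg _)
        _ = |c q (n + 1)| := mul_one _
    refine h3.trans ?_
    apply mul_le_mul_of_nonneg_right _ (abs_nonneg w)
    refine hb.trans (le_of_eq ?_)
    push_cast; ring
  have h4 : |∑' n, c q (n + 1) * w ^ (n + 1)| ≤ ∑' n, |c q (n + 1) * w ^ (n + 1)| := by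
    have := norm_tsum_le_tsum_norm (f := fun n => c q (n + 1) * w ^ (n + 1))
      (by simpa only [Real.norm_eq_abs] using habs)
    simpa only [Real.norm_eq_abs] using this
  refine h4.trans ?_
  have h5 := Summable.tsum_le_tsum hterm habs hMsw
  refine h5.trans (le_of_eq ?_)
  rw [tsum_mul_right, Ms]
/-! ### Coefficient identity and functional equation -/

lemma coeff_id (hq : 1 < |q|) (n : ℕ) :
    c q n - (q⁻¹ + q⁻¹ ^ 2) * sh q 2 n + q⁻¹ ^ 3 * sh q 4 n
      = q⁻¹ ^ n * c q n + 2 * q⁻¹ ^ n * sh q 1 n + q⁻¹ ^ n * sh q 2 n := by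
  have hq0 : q ≠ 0 := q_ne_zero hq
  match n with
  | 0 =>
    rw [sh_at_zero _ (by omega), sh_at_zero _ (by omega), sh_at_zero _ (by omega)]
    ring
  | 1 =>
    have e1 : sh q 1 1 = c q 0 := by rw [sh_le (by omega)]
    have e2 : sh q 2 1 = 0 := by unfold sh; rw [if_neg (by omega)]
    have e4 : sh q 4 1 = 0 := by unfold sh; rw [if_neg (by omega)]
    rw [e1, e2, e4, c_zero]
    have h1 := R1 hq
    field_simp
    linear_combination q ^ 2 * h1
  | 2 =>
    have e1 : sh q 1 2 = c q 1 := by rw [sh_le (by omega)]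
    have e2 : sh q 2 2 = c q 0 := by rw [sh_le (by omega)]
    have e4 : sh q 4 2 = 0 := by unfold sh; rw [if_neg (by omega)]
    rw [e1, e2, e4, c_zero]
    have h1 := R1 hq
    have h2 := R2 hq
    rw [c_zero] at h2
    field_simp
    linear_combination q * h1 + q * h2
  | 3 =>
    have e1 : sh q 1 3 = c q 2 := by rw [sh_le (by omega)]
    have e2 : sh q 2 3 = c q 1 := by rw [sh_le (by omega)]
    have e4 : sh q 4 3 = 0 := by unfold sh; rw [if_neg (by omega)]
    rw [e1, e2, e4]
    have h3 := R3 hq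
    field_simp
    linear_combination h3
  | (m + 4) =>
    have e1 : sh q 1 (m + 4) = c q (m + 3) := by rw [sh_le (by omega)]; congr 1
    have e2 : sh q 2 (m + 4) = c q (m + 2) := by rw [sh_le (by omega)]; congr 1
    have e4 : sh q 4 (m + 4) = c q m := by rw [sh_le (by omega)]; congr 1
    rw [e1, e2, e4]
    have h4 := R4 hq m
    have hp : q ^ (m + 4) ≠ 0 := pow_ne_zero _ hq0
    rw [inv_pow, inv_pow, inv_pow]
    field_simp
    linear_combination q ^ 3 * h4

lemma FE (hq : 1 < |q|) {v : ℝ} (hv : |v| ≤ 1) :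
    (1 - v ^ 2 * q⁻¹) * (1 - v ^ 2 * q⁻¹ ^ 2) * (∑' n, c q n * v ^ n)
      = (1 + v * q⁻¹) ^ 2 * (∑' n, c q n * (v * q⁻¹) ^ n) := by
  have htv : |v * q⁻¹| ≤ 1 := by
    rw [abs_mul, abs_inv]
    calc |v| * |q|⁻¹ ≤ 1 * 1 :=
      mul_le_mul hv (le_of_lt (hs_lt_one hq)) (by positivity) zero_le_one
    _ = 1 := mul_one 1
  obtain ⟨hs2, e2⟩ := sh_tsum hq hv 2
  obtain ⟨hs4, e4⟩ := sh_tsum hq hv 4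
  obtain ⟨hb1, f1⟩ := sh_tsum hq htv 1
  obtain ⟨hb2, f2⟩ := sh_tsum hq htv 2
  have hA := summable_cw hq hv
  have hB := summable_cw hq htv
  have key : ∑' n, (c q n * v ^ n - (q⁻¹ + q⁻¹ ^ 2) * (sh q 2 n * v ^ n)
        + q⁻¹ ^ 3 * (sh q 4 n * v ^ n))
      = ∑' n, (c q n * (v * q⁻¹) ^ n
        + (2 * (sh q 1 n * (v * q⁻¹) ^ n) + sh q 2 n * (v * q⁻¹) ^ n)) := by
    apply tsum_congr; intro n
    have h := coeff_id hq n
    rw [mul_pow]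
    linear_combination (v ^ n) * h
  have l1 : ∑' n, (c q n * v ^ n - (q⁻¹ + q⁻¹ ^ 2) * (sh q 2 n * v ^ n)
        + q⁻¹ ^ 3 * (sh q 4 n * v ^ n))
      = (∑' n, c q n * v ^ n) - (q⁻¹ + q⁻¹ ^ 2) * (∑' n, sh q 2 n * v ^ n)
        + q⁻¹ ^ 3 * (∑' n, sh q 4 n * v ^ n) := by
    rw [Summable.tsum_add (hA.sub (hs2.mul_left _)) (hs4.mul_left _), Summable.tsum_sub hA (hs2.mul_left _),
      tsum_mul_left, tsum_mul_left]
  have r1 : ∑' n, (c q n * (v * q⁻¹) ^ n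
        + (2 * (sh q 1 n * (v * q⁻¹) ^ n) + sh q 2 n * (v * q⁻¹) ^ n))
      = (∑' n, c q n * (v * q⁻¹) ^ n)
        + (2 * (∑' n, sh q 1 n * (v * q⁻¹) ^ n) + ∑' n, sh q 2 n * (v * q⁻¹) ^ n) := by
    rw [Summable.tsum_add hB ((hb1.mul_left 2).add hb2), Summable.tsum_add (hb1.mul_left 2) hb2, tsum_mul_left]
  rw [l1, r1, e2, e4, f1, f2] at key
  linear_combination key
/-! ### Infinite products via exp/log -/

lemma abs_log_one_add_le {x b : ℝ} (h : |x| ≤ b) (hb : b < 1) :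
    |Real.log (1 + x)| ≤ |x| / (1 - b) := by
  have hb0 : 0 ≤ b := le_trans (abs_nonneg x) h
  have hx1 : 0 < 1 + x := by cases abs_cases x <;> linarith
  have hub : Real.log (1 + x) ≤ |x| / (1 - b) := by
    have h1 : Real.log (1 + x) ≤ x := by
      have := Real.log_le_sub_one_of_pos hx1; linarith
    have h2 : x ≤ |x| := le_abs_self x
    have h3 : |x| ≤ |x| / (1 - b) := by
      rw [le_div_iff₀ (by linarith)]
      nlinarith [abs_nonneg x]
    linarith
  have hlb : -(|x| / (1 - b)) ≤ Real.log (1 + x) := by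
    have h1 : Real.log (1 + x)⁻¹ ≤ (1 + x)⁻¹ - 1 :=
      Real.log_le_sub_one_of_pos (by positivity)
    rw [Real.log_inv] at h1
    have h2 : 1 - (1 + x)⁻¹ ≤ Real.log (1 + x) := by linarith
    have h3 : -(|x| / (1 - b)) ≤ 1 - (1 + x)⁻¹ := by
      have h4 : (1 + x)⁻¹ = 1 - x / (1 + x) := by field_simp; ring
      rw [h4]
      have h5 : -(|x| / (1 - b)) ≤ x / (1 + x) := by
        rcases abs_cases x with ⟨hx, hx0⟩ | ⟨hx, hx0⟩
        · have h6 : 0 ≤ x / (1 + x) := div_nonneg (by linarith) (le_of_lt hx1)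
          have h7 : 0 ≤ |x| / (1 - b) := div_nonneg (abs_nonneg x) (by linarith)
          linarith
        · rw [hx, neg_div, neg_neg, div_le_div_iff₀ (by linarith) hx1]
          nlinarith
      linarith
    linarith
  exact abs_le.mpr ⟨hlb, hub⟩

lemma hasProd_exp_log (f : ℕ → ℝ) (hpos : ∀ i, 0 < f i)
    (hs : Summable fun i => Real.log (f i)) :
    HasProd f (Real.exp (∑' i, Real.log (f i))) := by
  have h := (hs.hasSum).rexp
  have heq : (Real.exp ∘ fun i => Real.log (f i)) = f :=
    funext fun i => Real.exp_log (hpos i)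
  rwa [heq] at h

/-- summability of logs for factors `1 + a i` with `|a i| ≤ |q|⁻¹ ^ (i+1)`. -/
lemma summable_log_one_add (hq : 1 < |q|) {a : ℕ → ℝ}
    (ha : ∀ i, |a i| ≤ |q|⁻¹ ^ (i + 1)) :
    Summable fun i => Real.log (1 + a i) := by
  have hs0 := hs_pos hq
  have hs1 := hs_lt_one hq
  apply Summable.of_norm_bounded (g := fun i => |q|⁻¹ ^ (i + 1) / (1 - |q|⁻¹))
  · apply Summable.div_const
    exact ((summable_geometric_of_lt_one (le_of_lt hs0) hs1).mul_left |q|⁻¹).congr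
      fun i => by rw [pow_succ]; ring
  · intro i
    rw [Real.norm_eq_abs]
    have hb : |a i| ≤ |q|⁻¹ := by
      refine (ha i).trans ?_
      calc |q|⁻¹ ^ (i + 1) ≤ |q|⁻¹ ^ 1 :=
            pow_le_pow_of_le_one (le_of_lt hs0) (le_of_lt hs1) (by omega)
        _ = |q|⁻¹ := pow_one _
    calc |Real.log (1 + a i)| ≤ |a i| / (1 - |q|⁻¹) := abs_log_one_add_le hb hs1
      _ ≤ |q|⁻¹ ^ (i + 1) / (1 - |q|⁻¹) :=
          div_le_div_of_nonneg_right (ha i) (by linarith) |>.trans (le_of_eq rfl)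
/-! ### Product representation -/

noncomputable def Af (q u : ℝ) (i : ℕ) : ℝ := 1 + u * q⁻¹ ^ (i + 1)
noncomputable def Bf (q u : ℝ) (i : ℕ) : ℝ := 1 - u ^ 2 * q⁻¹ ^ (i + 1)

lemma abs_term_le (hq : 1 < |q|) {w : ℝ} (hw : |w| ≤ 1) (i : ℕ) :
    |w * q⁻¹ ^ (i + 1)| ≤ |q|⁻¹ ^ (i + 1) := by
  rw [abs_mul, abs_pow, abs_inv]
  calc |w| * |q|⁻¹ ^ (i + 1) ≤ 1 * |q|⁻¹ ^ (i + 1) :=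
        mul_le_mul_of_nonneg_right hw (by positivity)
    _ = |q|⁻¹ ^ (i + 1) := one_mul _

lemma small_lt_one (hq : 1 < |q|) (i : ℕ) : |q|⁻¹ ^ (i + 1) < 1 := by
  have hs0 := hs_pos hq
  have hs1 := hs_lt_one hq
  calc |q|⁻¹ ^ (i + 1) ≤ |q|⁻¹ ^ 1 :=
        pow_le_pow_of_le_one (le_of_lt hs0) (le_of_lt hs1) (by omega)
    _ = |q|⁻¹ := pow_one _
    _ < 1 := hs1

lemma Af_pos {u : ℝ} (hq : 1 < |q|) (hu : |u| ≤ 1) (i : ℕ) : 0 < Af q u i := by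
  have h1 := (abs_term_le hq hu i).trans_lt (small_lt_one hq i)
  rw [Af]
  cases abs_cases (u * q⁻¹ ^ (i + 1)) with
  | inl h => linarith [h.1]
  | inr h => linarith [h.1]

lemma Bf_pos {u : ℝ} (hq : 1 < |q|) (hu : |u| ≤ 1) (i : ℕ) : 0 < Bf q u i := by
  have hu2 : |u ^ 2| ≤ 1 := by rw [abs_pow]; exact pow_le_one₀ (abs_nonneg u) hu
  have h1 := (abs_term_le hq hu2 i).trans_lt (small_lt_one hq i)
  rw [Bf, sub_eq_add_neg]
  cases abs_cases (u ^ 2 * q⁻¹ ^ (i + 1)) with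
  | inl h => linarith [h.1]
  | inr h => linarith [h.1]

lemma Af_log_summable {u : ℝ} (hq : 1 < |q|) (hu : |u| ≤ 1) :
    Summable fun i => Real.log (Af q u i) :=
  summable_log_one_add hq (a := fun i => u * q⁻¹ ^ (i + 1)) (abs_term_le hq hu)

lemma Bf_log_summable {u : ℝ} (hq : 1 < |q|) (hu : |u| ≤ 1) :
    Summable fun i => Real.log (Bf q u i) := by
  have hu2 : |u ^ 2| ≤ 1 := by rw [abs_pow]; exact pow_le_one₀ (abs_nonneg u) hu
  have h := summable_log_one_add hq (a := fun i => -(u ^ 2 * q⁻¹ ^ (i + 1)))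
    (fun i => by rw [abs_neg]; exact abs_term_le hq hu2 i)
  exact h.congr fun i => by rw [Bf, sub_eq_add_neg]

/-- Key induction: partial products times the tail of `G`. -/
lemma prod_key {u : ℝ} (hq : 1 < |q|) (hu : |u| < 1) (N : ℕ) :
    (∑' n, c q n * u ^ n) =
      ((∏ k ∈ Finset.range N, Af q u k) ^ 2 / (∏ i ∈ Finset.range (2 * N), Bf q u i))
        * (∑' n, c q n * (u * q⁻¹ ^ N) ^ n) := by
  induction N with
  | zero => simp
  | succ N ih =>
    set v : ℝ := u * q⁻¹ ^ N with hv
    have hvu : |v| ≤ |u| := by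
      rw [hv, abs_mul, abs_pow, abs_inv]
      calc |u| * |q|⁻¹ ^ N ≤ |u| * 1 := by
            apply mul_le_mul_of_nonneg_left _ (abs_nonneg u)
            exact pow_le_one₀ (by positivity) (le_of_lt (hs_lt_one hq))
        _ = |u| := mul_one _
    have hv1 : |v| ≤ 1 := hvu.trans (le_of_lt hu)
    have hfe := FE hq hv1
    have hb1 : 1 - v ^ 2 * q⁻¹ = Bf q u (2 * N) := by rw [Bf, hv]; ring
    have hb2 : 1 - v ^ 2 * q⁻¹ ^ 2 = Bf q u (2 * N + 1) := by rw [Bf, hv]; ring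
    have ha1 : 1 + v * q⁻¹ = Af q u N := by rw [Af, hv]; ring
    have hvt : v * q⁻¹ = u * q⁻¹ ^ (N + 1) := by rw [hv]; ring
    have hB1ne : Bf q u (2 * N) ≠ 0 := ne_of_gt (Bf_pos hq (le_of_lt hu) _)
    have hB2ne : Bf q u (2 * N + 1) ≠ 0 := ne_of_gt (Bf_pos hq (le_of_lt hu) _)
    have hQne : (∏ i ∈ Finset.range (2 * N), Bf q u i) ≠ 0 :=
      ne_of_gt (Finset.prod_pos fun i _ => Bf_pos hq (le_of_lt hu) i)
    have hGv : (∑' n, c q n * v ^ n)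
        = (Af q u N) ^ 2 * (∑' n, c q n * (u * q⁻¹ ^ (N + 1)) ^ n)
          / (Bf q u (2 * N) * Bf q u (2 * N + 1)) := by
      rw [eq_div_iff (mul_ne_zero hB1ne hB2ne)]
      rw [← hb1, ← hb2, ← ha1, ← hvt]
      linear_combination hfe
    rw [ih, hGv]
    have hp1 : ∏ k ∈ Finset.range (N + 1), Af q u k
        = (∏ k ∈ Finset.range N, Af q u k) * Af q u N := Finset.prod_range_succ _ _
    have hp2 : ∏ i ∈ Finset.range (2 * (N + 1)), Bf q u i
        = ((∏ i ∈ Finset.range (2 * N), Bf q u i) * Bf q u (2 * N)) * Bf q u (2 * N + 1) := by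
      rw [show 2 * (N + 1) = (2 * N + 1) + 1 by ring, Finset.prod_range_succ,
        Finset.prod_range_succ]
    rw [hp1, hp2]
    field_simp

/-- The limit: `G u` equals the infinite products ratio. -/
lemma G_eq_prods {u : ℝ} (hq : 1 < |q|) (hu : |u| < 1) :
    (∑' n, c q n * u ^ n)
      = (Real.exp (∑' i, Real.log (Af q u i))) ^ 2
        / Real.exp (∑' i, Real.log (Bf q u i)) := by
  have hu1 : |u| ≤ 1 := le_of_lt hu
  have hs0 := hs_pos hq
  have hs1 := hs_lt_one hq
  set eA := Real.exp (∑' i, Real.log (Af q u i)) with heA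
  set eB := Real.exp (∑' i, Real.log (Bf q u i)) with heB
  have hA : HasProd (Af q u) eA := hasProd_exp_log _ (Af_pos hq hu1) (Af_log_summable hq hu1)
  have hB : HasProd (Bf q u) eB := hasProd_exp_log _ (Bf_pos hq hu1) (Bf_log_summable hq hu1)
  have tA : Filter.Tendsto (fun N => ∏ k ∈ Finset.range N, Af q u k)
      Filter.atTop (nhds eA) := hA.tendsto_prod_nat
  have t2 : Filter.Tendsto (fun N : ℕ => 2 * N) Filter.atTop Filter.atTop :=
    Filter.tendsto_atTop_mono (fun n => by simp only [id_eq]; omega) Filter.tendsto_id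
  have tB : Filter.Tendsto (fun N => ∏ i ∈ Finset.range (2 * N), Bf q u i)
      Filter.atTop (nhds eB) := hB.tendsto_prod_nat.comp t2
  have tG : Filter.Tendsto (fun N => ∑' n, c q n * (u * q⁻¹ ^ N) ^ n)
      Filter.atTop (nhds 1) := by
    have hbound : ∀ N : ℕ, ‖(∑' n, c q n * (u * q⁻¹ ^ N) ^ n) - 1‖
        ≤ (Ms q * |u|) * |q|⁻¹ ^ N := by
      intro N
      have hw : |u * q⁻¹ ^ N| ≤ 1 := by
        rw [abs_mul, abs_pow, abs_inv]
        calc |u| * |q|⁻¹ ^ N ≤ 1 * 1 := by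
              apply mul_le_mul hu1 (pow_le_one₀ (by positivity) (le_of_lt hs1))
                (by positivity) zero_le_one
          _ = 1 := mul_one 1
      have hb := G_sub_one_bound hq hw
      rw [Real.norm_eq_abs]
      refine hb.trans (le_of_eq ?_)
      rw [abs_mul, abs_pow, abs_inv]
      ring
    have hz : Filter.Tendsto (fun N : ℕ => (Ms q * |u|) * |q|⁻¹ ^ N)
        Filter.atTop (nhds 0) := by
      have := (tendsto_pow_atTop_nhds_zero_of_lt_one (le_of_lt hs0) hs1).const_mul (Ms q * |u|)
      simpa using this
    have h0 := squeeze_zero_norm hbound hz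
    have h1 := h0.add_const 1
    simpa using h1
  have tAll : Filter.Tendsto
      (fun N => ((∏ k ∈ Finset.range N, Af q u k) ^ 2
        / (∏ i ∈ Finset.range (2 * N), Bf q u i))
        * (∑' n, c q n * (u * q⁻¹ ^ N) ^ n)) Filter.atTop (nhds ((eA ^ 2 / eB) * 1)) :=
    (((tA.pow 2).div tB (ne_of_gt (Real.exp_pos _))).mul tG)
  have tConst : Filter.Tendsto
      (fun _ : ℕ => (∑' n, c q n * u ^ n)) Filter.atTop (nhds (∑' n, c q n * u ^ n)) :=
    tendsto_const_nhds
  have hfin := tendsto_nhds_unique (tConst.congr (fun N => prod_key hq hu N)) tAll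
  rw [hfin, mul_one]
lemma choose_add (r m : ℕ) : (r + m).choose 2 = r.choose 2 + m.choose 2 + r * m := by
  induction m with
  | zero => simp
  | succ k ih =>
    have h1 : ∀ n : ℕ, (n + 1).choose 2 = n.choose 2 + n := by
      intro n
      rw [Nat.choose_two_right, Nat.choose_two_right, Nat.triangle_succ]
    have h2 := h1 (r + k)
    have h3 := h1 k
    have h4 : r + (k + 1) = (r + k) + 1 := by omega
    rw [h4, h2, ih, h3]
    ring

end GLAux

namespace GLAux

lemma coeff_glGamma (hq : 1 < |q|) (n : ℕ) :
    q ^ n.choose 2 * ∑ r ∈ Finset.range (n + 1), 1 / (glGamma q r * glGamma q (n - r))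
      = c q n := by
  rw [c, Finset.mul_sum]
  apply Finset.sum_congr rfl
  intro r hr
  rw [Finset.mem_range] at hr
  have hrn : r ≤ n := by omega
  have hm : r + (n - r) = n := by omega
  have hch : n.choose 2 = r.choose 2 + (n - r).choose 2 + r * (n - r) := by
    conv_lhs => rw [← hm]
    rw [choose_add]
  have hPr := P_ne hq r
  have hPm := P_ne hq (n - r)
  have hq0 := q_ne_zero hq
  rw [show glGamma q r = q ^ r.choose 2 * P q r from rfl,
    show glGamma q (n - r) = q ^ (n - r).choose 2 * P q (n - r) from rfl,
    d, hch, pow_add, pow_add]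
  field_simp

end GLAux

open GLAux in
/-- The power series identity
`∏_{i ≥ 1} (1 + u/qⁱ)² / ∏_{i ≥ 1} (1 - u²/qⁱ)
  = ∑_{n ≥ 0} uⁿ q^(n choose 2) ∑_{r=0}^{n} 1/(γ_r γ_{n-r})`,
stated as a convergent identity of real numbers for `|q| > 1` and `|u| < 1` (which
determines the underlying formal power series identity in `u`). -/
theorem gl_odd_q_series_identity (q u : ℝ) (hq : 1 < |q|) (hu : |u| < 1) :
    (∏' i : ℕ, (1 + u / q ^ (i + 1)) ^ 2) / (∏' i : ℕ, (1 - u ^ 2 / q ^ (i + 1))) =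
      ∑' n : ℕ, u ^ n * q ^ n.choose 2 *
        ∑ r ∈ Finset.range (n + 1), 1 / (glGamma q r * glGamma q (n - r)) := by
  have hu1 : |u| ≤ 1 := le_of_lt hu
  have hA : HasProd (Af q u) (Real.exp (∑' i, Real.log (Af q u i))) :=
    hasProd_exp_log _ (Af_pos hq hu1) (Af_log_summable hq hu1)
  have hB : HasProd (Bf q u) (Real.exp (∑' i, Real.log (Bf q u i))) :=
    hasProd_exp_log _ (Bf_pos hq hu1) (Bf_log_summable hq hu1)
  have h1 : (fun i : ℕ => (1 + u / q ^ (i + 1)) ^ 2) = fun i => Af q u i * Af q u i := by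
    funext i
    rw [Af, div_eq_mul_inv, ← inv_pow]
    ring
  have h2 : (fun i : ℕ => 1 - u ^ 2 / q ^ (i + 1)) = Bf q u := by
    funext i
    rw [Bf, div_eq_mul_inv, ← inv_pow]
  have hAA : (∏' i : ℕ, (1 + u / q ^ (i + 1)) ^ 2)
      = (Real.exp (∑' i, Real.log (Af q u i))) ^ 2 := by
    rw [h1, (hA.mul hA).tprod_eq, sq]
  have hBB : (∏' i : ℕ, (1 - u ^ 2 / q ^ (i + 1)))
      = Real.exp (∑' i, Real.log (Bf q u i)) := by
    rw [h2, hB.tprod_eq]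
  have hRHS : (∑' n : ℕ, u ^ n * q ^ n.choose 2 *
        ∑ r ∈ Finset.range (n + 1), 1 / (glGamma q r * glGamma q (n - r)))
      = ∑' n, c q n * u ^ n := by
    apply tsum_congr
    intro n
    rw [← coeff_glGamma hq n]
    ring
  rw [hAA, hBB, hRHS, G_eq_prods hq hu]
end

section
/- Let N-bar(d,q) denote the number of U-irreducible polynomials of degree d over F_{q^2}, i.e., the number of orbits of size d of the map a -> a^{-q} on the multiplicative group of the algebraic closure of F_q. Then N-bar(d,q) = (1/d) sum_{r | d} mu(r) (q^{d/r} - (-1)^{d/r}), where mu is the Moebius function. -/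
/-- The map `F̃ : a ↦ a^{-q}` on the multiplicative group of the algebraic closure of
`F = 𝔽_q`. -/
noncomputable def Ftilde (F : Type) [Field F] (q : ℕ) :
    (AlgebraicClosure F)ˣ → (AlgebraicClosure F)ˣ :=
  fun a => (a ^ q)⁻¹

/-- `N̄(d,q)`: the number of U-irreducible polynomials of degree `d`, i.e. the number of
orbits of size `d` of the map `a ↦ a^{-q}` on the multiplicative group of the algebraic
closure of `𝔽_q`: the number of points of exact period `d`, divided by `d`. -/
noncomputable def Nbar (F : Type) [Field F] (q d : ℕ) : ℕ :=
  Nat.card {a : (AlgebraicClosure F)ˣ //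
    (Ftilde F q)^[d] a = a ∧ ∀ m, 0 < m → m < d → (Ftilde F q)^[m] a ≠ a} / d

open Function

/-- `|(-q)^m - 1|`, the number of fixed points of the `m`-th iterate of `F̃`. -/
def nnAux (q m : ℕ) : ℕ := ((-(q : ℤ)) ^ m - 1).natAbs

lemma nnAux_cast (q m : ℕ) (hq : 1 ≤ q) : (nnAux q m : ℤ) = (q : ℤ) ^ m - (-1) ^ m := by
  have h1 : (-(q : ℤ)) ^ m - 1 = (-1) ^ m * ((q : ℤ) ^ m - (-1) ^ m) := by
    have h2 : ((-1 : ℤ)) ^ m * (-1) ^ m = 1 := by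
      rw [← mul_pow]; norm_num
    rw [neg_pow, mul_sub, h2]
  have h3 : (0 : ℤ) ≤ (q : ℤ) ^ m - (-1) ^ m := by
    have ha : ((-1 : ℤ)) ^ m ≤ 1 := by
      rcases Nat.even_or_odd m with h | h
      · rw [Even.neg_one_pow h]
      · rw [Odd.neg_one_pow h]; norm_num
    have hb : (1 : ℤ) ≤ (q : ℤ) ^ m := one_le_pow₀ (by exact_mod_cast hq)
    linarith
  rw [nnAux, h1, Int.natAbs_mul]
  rw [Int.natAbs_pow]
  simp only [Int.natAbs_neg, Int.natAbs_one, one_pow, one_mul]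
  exact Int.natAbs_of_nonneg h3

lemma zpow_eq_one_iff_natAbs {G : Type*} [Group G] (a : G) (z : ℤ) :
    a ^ z = 1 ↔ a ^ z.natAbs = 1 := by
  rcases Int.natAbs_eq z with h | h
  · conv_lhs => rw [h]
    rw [zpow_natCast]
  · conv_lhs => rw [h]
    rw [zpow_neg, inv_eq_one, zpow_natCast]

lemma ftilde_iterate {F : Type} [Field F] (q m : ℕ) (a : (AlgebraicClosure F)ˣ) :
    (Ftilde F q)^[m] a = a ^ ((-(q : ℤ)) ^ m) := by
  induction m with
  | zero => simp
  | succ m ih =>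
    rw [Function.iterate_succ_apply', ih]
    show ((a ^ ((-(q : ℤ)) ^ m)) ^ q)⁻¹ = _
    rw [← zpow_natCast, ← zpow_mul, ← zpow_neg]
    congr 1
    rw [pow_succ]
    ring

lemma ftilde_fixed_iff {F : Type} [Field F] (q m : ℕ) (a : (AlgebraicClosure F)ˣ) :
    (Ftilde F q)^[m] a = a ↔ a ∈ rootsOfUnity (nnAux q m) (AlgebraicClosure F) := by
  rw [mem_rootsOfUnity, ftilde_iterate, nnAux, ← zpow_eq_one_iff_natAbs]
  constructor
  · intro h
    rw [zpow_sub, zpow_one, h, mul_inv_cancel]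
  · intro h
    have := congrArg (· * a) h
    simpa [zpow_sub, zpow_one, inv_mul_cancel_right] using this

lemma nnAux_neZero {F : Type} [Field F] [Fintype F] {q : ℕ}
    (hq : Fintype.card F = q) {m : ℕ} (hm : 0 < m) :
    NeZero ((nnAux q m : ℕ) : AlgebraicClosure F) := by
  set K := AlgebraicClosure F
  have hq1 : 1 ≤ q := hq ▸ Fintype.card_pos
  have hqK : ((q : ℕ) : K) = 0 := by
    have h1 : ((q : ℕ) : F) = 0 := by
      rw [← hq]; exact FiniteField.cast_card_eq_zero F
    rw [← map_natCast (algebraMap F K) q, h1, map_zero]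
  constructor
  have h2 : ((nnAux q m : ℕ) : K) = ((nnAux q m : ℤ) : K) := by push_cast; ring
  rw [h2, nnAux_cast q m hq1]
  push_cast
  rw [hqK, zero_pow hm.ne']
  simp only [zero_sub, ne_eq, neg_eq_zero]
  exact pow_ne_zero _ (by norm_num)

/-- Generic: the number of points of minimal period `d` is divisible by `d`. -/
lemma dvd_card_minimalPeriod_eq {α : Type*} (f : α → α) {d : ℕ} (hd : 0 < d)
    [Finite {x : α // minimalPeriod f x = d}] :
    d ∣ Nat.card {x : α // minimalPeriod f x = d} := by
  classical
  set E := {x : α // minimalPeriod f x = d} with hE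
  have hper : ∀ x : E, IsPeriodicPt f d x.val := fun x => by
    have h := isPeriodicPt_minimalPeriod f x.val
    rwa [x.2] at h
  have hmem : ∀ (x : E) (k : ℕ), minimalPeriod f (f^[k] x.val) = d := by
    intro x k
    rw [minimalPeriod_apply_iterate, x.2]
    apply minimalPeriod_pos_iff_mem_periodicPts.mp
    rw [x.2]; exact hd
  let it : E → ℕ → E := fun x k => ⟨f^[k] x.val, hmem x k⟩
  let r : E → E → Prop := fun x y => ∃ k, f^[k] x.val = y.val
  have hrefl : ∀ x, r x x := fun x => ⟨0, rfl⟩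
  have hsymm : ∀ {x y}, r x y → r y x := by
    rintro x y ⟨k, hk⟩
    refine ⟨d - k % d, ?_⟩
    have h1 : f^[k % d] x.val = y.val := by
      rw [(hper x).iterate_mod_apply k]; exact hk
    rw [← h1, ← Function.iterate_add_apply,
      Nat.sub_add_cancel (le_of_lt (Nat.mod_lt _ hd))]
    exact (hper x).eq
  have htrans : ∀ {x y z}, r x y → r y z → r x z := by
    rintro x y z ⟨k, hk⟩ ⟨l, hl⟩
    exact ⟨l + k, by rw [Function.iterate_add_apply, hk, hl]⟩
  let s : Setoid E := ⟨r, hrefl, hsymm, htrans⟩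
  haveI : Fintype E := Fintype.ofFinite E
  have key : ∀ b ∈ Finset.univ.image (Quotient.mk s),
      (Finset.univ.filter (fun y => Quotient.mk s y = b)).card = d := by
    intro b hb
    obtain ⟨x, -, rfl⟩ := Finset.mem_image.mp hb
    have hfib : Finset.univ.filter (fun y => Quotient.mk s y = Quotient.mk s x)
        = (Finset.range d).image (it x) := by
      ext y
      simp only [Finset.mem_filter, Finset.mem_univ, true_and, Finset.mem_image,
        Finset.mem_range]
      constructor
      · intro h
        obtain ⟨k, hk⟩ := hsymm (Quotient.exact h)
        refine ⟨k % d, Nat.mod_lt _ hd, ?_⟩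
        apply Subtype.ext
        show f^[k % d] x.val = y.val
        rw [(hper x).iterate_mod_apply k]; exact hk
      · rintro ⟨k, -, rfl⟩
        exact Quotient.sound (hsymm ⟨k, rfl⟩)
    rw [hfib, Finset.card_image_of_injOn, Finset.card_range]
    intro i hi j hj hij
    have h1 : f^[i] x.val = f^[j] x.val := congrArg Subtype.val hij
    have h2 : minimalPeriod f x.val = d := x.2
    refine iterate_injOn_Iio_minimalPeriod ?_ ?_ h1 <;>
      · simp only [Set.mem_Iio, h2]
        exact Finset.mem_range.mp ‹_›
  have hcard := Finset.card_eq_sum_card_image (Quotient.mk s) (Finset.univ : Finset E)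
  rw [Finset.sum_congr rfl key, Finset.sum_const, smul_eq_mul] at hcard
  rw [Nat.card_eq_fintype_card, ← Finset.card_univ, hcard]
  exact dvd_mul_left d _

/-- Generic: points of period `m` split according to minimal period. -/
lemma card_isPeriodicPt_eq_sum {α : Type*} (f : α → α) {m : ℕ} (hm : 0 < m)
    [Finite {x : α // IsPeriodicPt f m x}] :
    Nat.card {x : α // IsPeriodicPt f m x}
      = ∑ r ∈ m.divisors, Nat.card {x : α // minimalPeriod f x = r} := by
  classical
  let e : {x : α // IsPeriodicPt f m x}
      ≃ Σ r : {r : ℕ // r ∈ m.divisors}, {x : α // minimalPeriod f x = r.val} :=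
    { toFun := fun x => ⟨⟨minimalPeriod f x.val,
        Nat.mem_divisors.mpr ⟨x.2.minimalPeriod_dvd, hm.ne'⟩⟩, ⟨x.val, rfl⟩⟩
      invFun := fun p => ⟨p.2.val, isPeriodicPt_iff_minimalPeriod_dvd.mpr (by
        rw [p.2.2]; exact (Nat.mem_divisors.mp p.1.2).1)⟩
      left_inv := fun x => rfl
      right_inv := by
        rintro ⟨⟨r, hr⟩, ⟨x, hx⟩⟩
        have hx' : minimalPeriod f x = r := hx
        subst hx'
        rfl }
  haveI : Finite (Σ r : {r : ℕ // r ∈ m.divisors}, {x : α // minimalPeriod f x = r.val}) :=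
    Finite.of_equiv _ e
  haveI inst : ∀ r : {r : ℕ // r ∈ m.divisors}, Finite {x : α // minimalPeriod f x = r.val} :=
    fun r => Finite.of_injective
      (Sigma.mk r : _ → Σ r : {r : ℕ // r ∈ m.divisors}, {x : α // minimalPeriod f x = r.val})
      sigma_mk_injective
  haveI inst2 : ∀ r : {r : ℕ // r ∈ m.divisors}, Fintype {x : α // minimalPeriod f x = r.val} :=
    fun r => Fintype.ofFinite _
  rw [Nat.card_congr e, Nat.card_eq_fintype_card, Fintype.card_sigma,
    ← Finset.sum_coe_sort m.divisors (fun r => Nat.card {x : α // minimalPeriod f x = r})]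
  congr 1
  ext r
  rw [Nat.card_eq_fintype_card]

/-- `N̄(d,q) = (1/d) ∑_{r ∣ d} μ(r) (q^{d/r} - (-1)^{d/r})`, where `μ` is the Möbius
function. -/
theorem Nbar_eq_moebius_sum (F : Type) [Field F] [Fintype F] (q d : ℕ)
    (hq : Fintype.card F = q) (hd : 0 < d) :
    (Nbar F q d : ℚ) =
      (1 / (d : ℚ)) * ∑ r ∈ d.divisors,
        (ArithmeticFunction.moebius r : ℚ) * ((q : ℚ) ^ (d / r) - (-1) ^ (d / r)) := by
  classical
  have hq2 : 2 ≤ q := by rw [← hq]; exact Fintype.one_lt_card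
  set K := AlgebraicClosure F with hK
  set f := Ftilde F q with hf
  have hfixfin : ∀ m : ℕ, 0 < m → Finite {a : Kˣ // IsPeriodicPt f m a} := by
    intro m hm
    haveI := nnAux_neZero hq hm
    haveI : NeZero (nnAux q m) := NeZero.of_neZero_natCast K
    exact Finite.of_equiv _ (Equiv.subtypeEquivRight
      (fun a => (ftilde_fixed_iff q m a).symm))
  have hfixcard : ∀ m : ℕ, 0 < m → Nat.card {a : Kˣ // IsPeriodicPt f m a} = nnAux q m := by
    intro m hm
    haveI := nnAux_neZero hq hm
    haveI : NeZero (nnAux q m) := NeZero.of_neZero_natCast K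
    have e := Equiv.subtypeEquivRight (p := fun a : Kˣ => IsPeriodicPt f m a)
      (q := fun a => a ∈ rootsOfUnity (nnAux q m) K) (fun a => ftilde_fixed_iff q m a)
    rw [Nat.card_congr e]
    exact HasEnoughRootsOfUnity.natCard_rootsOfUnity K _
  have hEfin : ∀ r : ℕ, 0 < r → Finite {a : Kˣ // minimalPeriod f a = r} := by
    intro r hr
    haveI := hfixfin r hr
    exact Finite.of_injective
      (fun a => (⟨a.val, by rw [isPeriodicPt_iff_minimalPeriod_dvd, a.2]⟩ :
        {a : Kˣ // IsPeriodicPt f r a}))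
      (by intro a b h; apply Subtype.ext; simpa [Subtype.ext_iff] using h)
  set g : ℕ → ℕ := fun r => Nat.card {a : Kˣ // minimalPeriod f a = r} with hg
  have h1 : ∀ m : ℕ, 0 < m →
      ∑ r ∈ m.divisors, (g r : ℚ) = (q : ℚ) ^ m - (-1) ^ m := by
    intro m hm
    haveI := hfixfin m hm
    have hcast : ((nnAux q m : ℕ) : ℚ) = (q : ℚ) ^ m - (-1) ^ m := by
      have := nnAux_cast q m (by omega)
      have h' : ((nnAux q m : ℤ) : ℚ) = (((q : ℤ) ^ m - (-1) ^ m : ℤ) : ℚ) := by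
        exact_mod_cast congrArg (fun z : ℤ => (z : ℚ)) this
      push_cast at h'
      exact_mod_cast h'
    calc ∑ r ∈ m.divisors, (g r : ℚ)
        = ((∑ r ∈ m.divisors, g r : ℕ) : ℚ) := by push_cast; rfl
      _ = ((Nat.card {a : Kˣ // IsPeriodicPt f m a} : ℕ) : ℚ) := by
          rw [card_isPeriodicPt_eq_sum f hm]
      _ = ((nnAux q m : ℕ) : ℚ) := by rw [hfixcard m hm]
      _ = (q : ℚ) ^ m - (-1) ^ m := hcast
  have h2 := (ArithmeticFunction.sum_eq_iff_sum_smul_moebius_eq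
    (f := fun r => (g r : ℚ)) (g := fun n => (q : ℚ) ^ n - (-1) ^ n)).mp h1 d hd
  rw [Nat.sum_divisorsAntidiagonal
    (fun i j => (ArithmeticFunction.moebius i) • ((q : ℚ) ^ j - (-1) ^ j))] at h2
  haveI := hEfin d hd
  have hdvd : d ∣ g d := dvd_card_minimalPeriod_eq f hd
  have hNbar : Nbar F q d = g d / d := by
    unfold Nbar
    congr 1
    apply Nat.card_congr
    apply Equiv.subtypeEquivRight
    intro a
    constructor
    · rintro ⟨ha1, ha2⟩
      have hp : IsPeriodicPt f d a := ha1
      have hle : minimalPeriod f a ≤ d := Nat.le_of_dvd hd hp.minimalPeriod_dvd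
      have hpos := hp.minimalPeriod_pos hd
      rcases eq_or_lt_of_le hle with h | h
      · exact h
      · exact absurd (isPeriodicPt_minimalPeriod f a).eq (ha2 _ hpos h)
    · intro h
      refine ⟨?_, ?_⟩
      · have := isPeriodicPt_minimalPeriod f a
        rw [h] at this
        exact this
      · intro m hm hmd heq
        have hp : IsPeriodicPt f m a := heq
        exact not_isPeriodicPt_of_pos_of_lt_minimalPeriod hm.ne' (by rw [h]; exact hmd) hp
  have hsum : ((g d : ℚ)) = ∑ r ∈ d.divisors,
      (ArithmeticFunction.moebius r : ℚ) * ((q : ℚ) ^ (d / r) - (-1) ^ (d / r)) := by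
    rw [← h2]
    refine Finset.sum_congr rfl fun r hr => ?_
    rw [zsmul_eq_mul]
  rw [hNbar, Nat.cast_div hdvd (by exact_mod_cast hd.ne'), hsum]
  ring
end
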